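/- arXiv:1311.5481 — 7 statements merged into one kernel-verified Lean document; each statement's English description precedes it below -/
import Mathlib

section
/- Let U be a finite set and let 𝓛 be a laminar family of subsets of U such that every member of 𝓛 has odd cardinality at least 3. Then |𝓛| ≤ ⌊(|U| − 1)/2⌋. -/
/-- A family of finite sets is laminar if any two members are nested or disjoint. -/
def Laminar {α : Type*} (𝓛 : Finset (Finset α)) : Prop :=
  ∀ S ∈ 𝓛, ∀ T ∈ 𝓛, S ⊆ T ∨ T ⊆ S ∨ Disjoint S T

open Finset

section Aux

variable {α : Type*} [DecidableEq α]

lemma exists_root_aux (𝓕 : Finset (Finset α)) {S : Finset α} (hS : S ∈ 𝓕) :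
    ∃ r ∈ 𝓕, S ⊆ r ∧ ∀ T ∈ 𝓕, r ⊆ T → r = T := by
  obtain ⟨r, hr, hmax⟩ := (𝓕.filter fun T => S ⊆ T).exists_max_image (·.card)
    ⟨S, mem_filter.2 ⟨hS, Finset.Subset.rfl⟩⟩
  rw [mem_filter] at hr
  exact ⟨r, hr.1, hr.2, fun T hT hrT =>
    Finset.eq_of_subset_of_card_le hrT (hmax T (mem_filter.2 ⟨hT, hr.2.trans hrT⟩))⟩

lemma roots_disjoint_aux (𝓕 : Finset (Finset α)) (hlam : Laminar 𝓕)
    {r₁ r₂ : Finset α}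
    (h₁ : r₁ ∈ 𝓕.filter (fun S => ∀ T ∈ 𝓕, S ⊆ T → S = T))
    (h₂ : r₂ ∈ 𝓕.filter (fun S => ∀ T ∈ 𝓕, S ⊆ T → S = T))
    (hne' : r₁ ≠ r₂) : Disjoint r₁ r₂ := by
  rw [mem_filter] at h₁ h₂
  rcases hlam r₁ h₁.1 r₂ h₂.1 with h | h | h
  · exact absurd (h₁.2 r₂ h₂.1 h) hne'
  · exact absurd (h₂.2 r₁ h₁.1 h).symm hne'
  · exact h

lemma card_eq_sum_roots (𝓕 : Finset (Finset α)) (hlam : Laminar 𝓕)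
    (hne : ∀ S ∈ 𝓕, S.Nonempty) :
    𝓕.card = ∑ r ∈ 𝓕.filter (fun S => ∀ T ∈ 𝓕, S ⊆ T → S = T),
      (𝓕.filter (· ⊆ r)).card := by
  rw [← Finset.card_biUnion]
  · congr 1
    apply Finset.Subset.antisymm
    · intro S hS
      obtain ⟨r, hr, hSr, hmax⟩ := exists_root_aux 𝓕 hS
      exact Finset.mem_biUnion.2 ⟨r, mem_filter.2 ⟨hr, hmax⟩, mem_filter.2 ⟨hS, hSr⟩⟩
    · intro S hS
      obtain ⟨r, _, hS⟩ := Finset.mem_biUnion.1 hS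
      exact (mem_filter.1 hS).1
  · intro r₁ h₁ r₂ h₂ hne'
    have hd : Disjoint r₁ r₂ := roots_disjoint_aux 𝓕 hlam h₁ h₂ hne'
    simp only [Finset.disjoint_left, mem_filter]
    rintro S ⟨hS, hsub1⟩ ⟨_, hsub2⟩
    obtain ⟨x, hx⟩ := hne S hS
    exact (Finset.disjoint_left.1 hd (hsub1 hx)) (hsub2 hx)

lemma sum_roots_card_le (𝓕 : Finset (Finset α)) (hlam : Laminar 𝓕)
    {V : Finset α} (hV : ∀ S ∈ 𝓕, S ⊆ V) :
    ∑ r ∈ 𝓕.filter (fun S => ∀ T ∈ 𝓕, S ⊆ T → S = T), r.card ≤ V.card := by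
  have hd : ∀ r₁ ∈ 𝓕.filter (fun S => ∀ T ∈ 𝓕, S ⊆ T → S = T),
      ∀ r₂ ∈ 𝓕.filter (fun S => ∀ T ∈ 𝓕, S ⊆ T → S = T), r₁ ≠ r₂ → Disjoint (id r₁) (id r₂) :=
    fun r₁ h₁ r₂ h₂ hne' => roots_disjoint_aux 𝓕 hlam h₁ h₂ hne'
  have : ∑ r ∈ 𝓕.filter (fun S => ∀ T ∈ 𝓕, S ⊆ T → S = T), r.card
      = ((𝓕.filter (fun S => ∀ T ∈ 𝓕, S ⊆ T → S = T)).biUnion id).card :=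
    (Finset.card_biUnion hd).symm
  rw [this]
  exact Finset.card_le_card (Finset.biUnion_subset.2 fun r hr => hV r (mem_filter.1 hr).1)

lemma key_lemma (𝓛 : Finset (Finset α)) (hlam : Laminar 𝓛)
    (hodd : ∀ S ∈ 𝓛, Odd S.card) (hthree : ∀ S ∈ 𝓛, 3 ≤ S.card) :
    ∀ n : ℕ, ∀ T ∈ 𝓛, T.card ≤ n → 2 * (𝓛.filter (· ⊆ T)).card + 1 ≤ T.card := by
  intro n
  induction n with
  | zero => intro T hT h; have := hthree T hT; omega
  | succ n ih =>
    intro T hT hn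
    set 𝓕 := 𝓛.filter (· ⊂ T) with h𝓕
    have hmem𝓕 : ∀ S ∈ 𝓕, S ∈ 𝓛 ∧ S ⊂ T := fun S hS => mem_filter.1 hS
    have hlam𝓕 : Laminar 𝓕 := fun S hS T' hT' =>
      hlam S (hmem𝓕 S hS).1 T' (hmem𝓕 T' hT').1
    have hne𝓕 : ∀ S ∈ 𝓕, S.Nonempty := fun S hS =>
      Finset.card_pos.1 (by have := hthree S (hmem𝓕 S hS).1; omega)
    set R := 𝓕.filter (fun S => ∀ T' ∈ 𝓕, S ⊆ T' → S = T') with hR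
    have hRmem : ∀ r ∈ R, r ∈ 𝓛 ∧ r ⊂ T := fun r hr => hmem𝓕 r (mem_filter.1 hr).1
    -- split off T itself
    have hins : 𝓛.filter (· ⊆ T) = insert T 𝓕 := by
      ext S
      simp only [mem_filter, mem_insert, h𝓕]
      constructor
      · rintro ⟨h1, h2⟩
        by_cases h : S = T
        · exact Or.inl h
        · exact Or.inr ⟨h1, Finset.ssubset_iff_subset_ne.2 ⟨h2, h⟩⟩
      · rintro (rfl | ⟨h1, h2⟩)
        · exact ⟨hT, Finset.Subset.rfl⟩
        · exact ⟨h1, h2.subset⟩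
    have hTnot : T ∉ 𝓕 := by
      simp only [h𝓕, mem_filter]
      rintro ⟨-, h⟩
      exact h.ne rfl
    have hsplit : (𝓛.filter (· ⊆ T)).card = 𝓕.card + 1 := by
      rw [hins, Finset.card_insert_of_notMem hTnot]
    -- decompose 𝓕 by its roots
    have hcard : 𝓕.card = ∑ r ∈ R, (𝓕.filter (· ⊆ r)).card :=
      card_eq_sum_roots 𝓕 hlam𝓕 hne𝓕
    have hfilt : ∀ r ∈ R, 𝓕.filter (· ⊆ r) = 𝓛.filter (· ⊆ r) := by
      intro r hr
      have hrT : r ⊂ T := (hRmem r hr).2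
      ext S
      simp only [mem_filter, h𝓕]
      constructor
      · rintro ⟨⟨h1, -⟩, h2⟩; exact ⟨h1, h2⟩
      · rintro ⟨h1, h2⟩
        exact ⟨⟨h1, Finset.ssubset_of_subset_of_ssubset h2 hrT⟩, h2⟩
    have hsum : 2 * 𝓕.card + R.card ≤ ∑ r ∈ R, r.card := by
      have : 2 * 𝓕.card + R.card = ∑ r ∈ R, (2 * (𝓕.filter (· ⊆ r)).card + 1) := by
        rw [Finset.sum_add_distrib, Finset.sum_const, ← Finset.mul_sum, ← hcard,
          smul_eq_mul, mul_one]
      rw [this]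
      refine Finset.sum_le_sum fun r hr => ?_
      rw [hfilt r hr]
      exact ih r (hRmem r hr).1
        (by have := Finset.card_lt_card (hRmem r hr).2; omega)
    have hsumT : ∑ r ∈ R, r.card ≤ T.card :=
      sum_roots_card_le 𝓕 hlam𝓕 (fun S hS => (hmem𝓕 S hS).2.subset)
    -- parity
    have heven : Even ((∑ r ∈ R, r.card) + R.card) := by
      have : (∑ r ∈ R, r.card) + R.card = ∑ r ∈ R, (r.card + 1) := by
        rw [Finset.sum_add_distrib, Finset.sum_const, smul_eq_mul, mul_one]
      rw [this]
      refine Finset.even_sum _ fun r hr => ?_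
      obtain ⟨m, hm⟩ := hodd r (hRmem r hr).1
      exact ⟨m + 1, by omega⟩
    -- small number of roots forces strict inequality
    have hsmall : R.card ≤ 1 → ∑ r ∈ R, r.card < T.card := by
      intro h
      rcases Finset.eq_empty_or_nonempty R with h0 | hRne
      · rw [h0]; simp only [Finset.sum_empty]
        have := hthree T hT; omega
      · have h1 : R.card = 1 := le_antisymm h (Finset.card_pos.2 hRne)
        obtain ⟨r, hr⟩ := Finset.card_eq_one.1 h1
        rw [hr, Finset.sum_singleton]
        exact Finset.card_lt_card (hRmem r (by rw [hr]; exact Finset.mem_singleton_self r)).2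
    have hc0 : R.card ≠ 0 ∨ 𝓕.card = 0 := by
      rcases Finset.eq_empty_or_nonempty R with h0 | hRne
      · right; rw [hcard, h0, Finset.sum_empty]
      · left; have := Finset.card_pos.2 hRne; omega
    obtain ⟨t, ht⟩ := hodd T hT
    obtain ⟨m, hm⟩ := heven
    have h3 := hthree T hT
    rw [hsplit]
    rcases le_or_gt R.card 1 with hsm | hlg
    · have := hsmall hsm; omega
    · omega

end Aux

/-- A laminar family of odd-cardinality subsets of a finite universe `U`, each of
cardinality at least 3, has at most `⌊(|U| - 1)/2⌋` members. -/
theorem laminar_family_card_le {α : Type*} [DecidableEq α]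
    (U : Finset α) (𝓛 : Finset (Finset α))
    (hsub : ∀ S ∈ 𝓛, S ⊆ U)
    (hlam : Laminar 𝓛)
    (hodd : ∀ S ∈ 𝓛, Odd S.card)
    (hthree : ∀ S ∈ 𝓛, 3 ≤ S.card) :
    𝓛.card ≤ (U.card - 1) / 2 := by
  rcases Finset.eq_empty_or_nonempty 𝓛 with rfl | ⟨S₀, hS₀⟩
  · simp
  · have hne : ∀ S ∈ 𝓛, S.Nonempty := fun S hS =>
      Finset.card_pos.1 (by have := hthree S hS; omega)
    set R := 𝓛.filter (fun S => ∀ T ∈ 𝓛, S ⊆ T → S = T) with hR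
    have hcard : 𝓛.card = ∑ r ∈ R, (𝓛.filter (· ⊆ r)).card :=
      card_eq_sum_roots 𝓛 hlam hne
    have hsumU : ∑ r ∈ R, r.card ≤ U.card := sum_roots_card_le 𝓛 hlam hsub
    have hRne : R.Nonempty := by
      obtain ⟨r, hr, _, hmax⟩ := exists_root_aux 𝓛 hS₀
      exact ⟨r, Finset.mem_filter.2 ⟨hr, hmax⟩⟩
    have hsum : 2 * 𝓛.card + R.card ≤ ∑ r ∈ R, r.card := by
      have : 2 * 𝓛.card + R.card = ∑ r ∈ R, (2 * (𝓛.filter (· ⊆ r)).card + 1) := by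
        rw [Finset.sum_add_distrib, Finset.sum_const, ← Finset.mul_sum, ← hcard,
          smul_eq_mul, mul_one]
      rw [this]
      refine Finset.sum_le_sum fun r hr => ?_
      exact key_lemma 𝓛 hlam hodd hthree r.card r (Finset.mem_filter.1 hr).1 le_rfl
    have h1 : 1 ≤ R.card := Finset.card_pos.2 hRne
    rw [Nat.le_div_iff_mul_le (by norm_num)]
    omega
end

section
/- The subset system associated with the Bounded Color Matching problem — ground set E and family 𝓛 = { M ⊆ E : M is a matching and |M ∩ E_j| ≤ w_j for every color j } — is closed under taking subsets and is 3-extendible. -/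
/-- A set of edges (as unordered pairs) is a matching if its edges are pairwise
vertex-disjoint. -/
def IsMatchingSet {V : Type*} (M : Finset (Sym2 V)) : Prop :=
  ∀ e ∈ M, ∀ f ∈ M, e ≠ f → ∀ v : V, v ∈ e → v ∉ f

/-- The subset system of the Bounded Color Matching problem — the sets of edges that are
matchings of `G` using at most `w j` edges of each color `j` — is closed under taking
subsets and is 3-extendible. -/
theorem boundedColorMatching_downClosed_and_threeExtendible
    {V : Type*} [Fintype V] [DecidableEq V]
    (G : SimpleGraph V) [DecidableRel G.Adj]
    (k : ℕ) (c : Sym2 V → Fin k) (w : Fin k → ℕ) (hw : ∀ j, 1 ≤ w j)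
    (𝓛 : Finset (Sym2 V) → Prop)
    (h𝓛 : ∀ M, 𝓛 M ↔ (M ⊆ G.edgeFinset ∧ IsMatchingSet M ∧
      ∀ j, (M.filter (fun e => c e = j)).card ≤ w j)) :
    (∀ X, 𝓛 X → ∀ Y ⊆ X, 𝓛 Y) ∧
    (∀ X, 𝓛 X → ∀ x ∉ X, 𝓛 (insert x X) → ∀ Y, 𝓛 Y → X ⊆ Y →
      ∃ Y' ⊆ Y \ X, Y'.card ≤ 3 ∧ 𝓛 (insert x (Y \ Y'))) := by
  classical
  constructor
  · intro X hX Y hYX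
    rw [h𝓛] at hX ⊢
    obtain ⟨h1, h2, h3⟩ := hX
    exact ⟨hYX.trans h1, fun e he f hf => h2 e (hYX he) f (hYX hf),
      fun j => le_trans (Finset.card_le_card (Finset.filter_subset_filter _ hYX)) (h3 j)⟩
  · intro X hX x
    induction x using Sym2.inductionOn with
    | _ a b =>
    intro hx hxX Y hY hXY
    rw [h𝓛] at hX hxX hY
    obtain ⟨hX1, hX2, hX3⟩ := hX
    obtain ⟨hxX1, hxX2, hxX3⟩ := hxX
    obtain ⟨hY1, hY2, hY3⟩ := hY
    by_cases hxY : s(a, b) ∈ Y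
    · refine ⟨{s(a, b)}, ?_, by simp, ?_⟩
      · simp [Finset.singleton_subset_iff, hxY, hx]
      · rw [h𝓛]
        have : insert s(a, b) (Y \ {s(a, b)}) = Y := by
          rw [Finset.sdiff_singleton_eq_erase, Finset.insert_erase hxY]
        rw [this]; exact ⟨hY1, hY2, hY3⟩
    · -- x = s(a,b) ∉ Y
      set C := (Y \ X).filter (fun e => a ∈ e ∨ b ∈ e) with hCdef
      -- edges of X avoid a and b
      have hXab : ∀ e ∈ X, a ∉ e ∧ b ∉ e := by
        intro e he
        have hne : s(a, b) ≠ e := fun h => hx (h ▸ he)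
        have h1 := hxX2 s(a, b) (Finset.mem_insert_self _ _) e
          (Finset.mem_insert_of_mem he) hne
        exact ⟨h1 a (by simp), h1 b (by simp)⟩
      -- edges of S := Y \ C avoid a and b
      set S := Y \ C with hSdef
      have hSY : S ⊆ Y := Finset.sdiff_subset
      have hXS : X ⊆ S := by
        intro e he
        refine Finset.mem_sdiff.2 ⟨hXY he, ?_⟩
        intro hc
        exact (Finset.mem_sdiff.1 (Finset.mem_filter.1 hc).1).2 he
      have hSab : ∀ e ∈ S, a ∉ e ∧ b ∉ e := by
        intro e he
        obtain ⟨heY, heC⟩ := Finset.mem_sdiff.1 he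
        by_cases heX : e ∈ X
        · exact hXab e heX
        · constructor
          · intro ha
            exact heC (Finset.mem_filter.2 ⟨Finset.mem_sdiff.2 ⟨heY, heX⟩, Or.inl ha⟩)
          · intro hb
            exact heC (Finset.mem_filter.2 ⟨Finset.mem_sdiff.2 ⟨heY, heX⟩, Or.inr hb⟩)
      -- card C ≤ 2
      have hCcard : C.card ≤ 2 := by
        have hsub : C ⊆ Y.filter (a ∈ ·) ∪ Y.filter (b ∈ ·) := by
          intro e he
          obtain ⟨heYX, hab⟩ := Finset.mem_filter.1 he
          have heY := (Finset.mem_sdiff.1 heYX).1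
          rcases hab with ha | hb
          · exact Finset.mem_union_left _ (Finset.mem_filter.2 ⟨heY, ha⟩)
          · exact Finset.mem_union_right _ (Finset.mem_filter.2 ⟨heY, hb⟩)
        have h1 : (Y.filter (a ∈ ·)).card ≤ 1 := by
          rw [Finset.card_le_one]
          intro e he f hf
          obtain ⟨heY, ha⟩ := Finset.mem_filter.1 he
          obtain ⟨hfY, hb⟩ := Finset.mem_filter.1 hf
          by_contra hne
          exact hY2 e heY f hfY hne a ha hb
        have h2 : (Y.filter (b ∈ ·)).card ≤ 1 := by
          rw [Finset.card_le_one]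
          intro e he f hf
          obtain ⟨heY, ha⟩ := Finset.mem_filter.1 he
          obtain ⟨hfY, hb⟩ := Finset.mem_filter.1 hf
          by_contra hne
          exact hY2 e heY f hfY hne b ha hb
        calc C.card ≤ _ := Finset.card_le_card hsub
          _ ≤ _ := Finset.card_union_le _ _
          _ ≤ 2 := by omega
      have hCsub : C ⊆ Y \ X := Finset.filter_subset _ _
      set j0 := c s(a, b) with hj0
      -- matching property of insert x T for T ⊆ S
      have hmatch : ∀ T ⊆ S, IsMatchingSet (insert s(a, b) T) := by
        intro T hTS e he f hf hef v hv
        rcases Finset.mem_insert.1 he with he' | he' <;>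
          rcases Finset.mem_insert.1 hf with hf' | hf'
        · exact absurd (he'.trans hf'.symm) hef
        · subst he'
          have hf'' := hSab f (hTS hf')
          rcases Sym2.mem_iff.1 hv with rfl | rfl
          · exact hf''.1
          · exact hf''.2
        · subst hf'
          have he'' := hSab e (hTS he')
          intro hvx
          rcases Sym2.mem_iff.1 hvx with rfl | rfl
          · exact he''.1 hv
          · exact he''.2 hv
        · exact hY2 e (hSY (hTS he')) f (hSY (hTS hf')) hef v hv
      -- color counts for T ⊆ S (for colors ≠ j0)
      have hsubedge : ∀ T ⊆ S, insert s(a, b) T ⊆ G.edgeFinset := by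
        intro T hTS
        exact Finset.insert_subset (hxX1 (Finset.mem_insert_self _ _))
          ((hTS.trans hSY).trans hY1)
      have hxnotS : ∀ T ⊆ S, s(a, b) ∉ T := fun T hTS h => hxY (hSY (hTS h))
      by_cases hlt : ((S.filter (fun e => c e = j0)).card) < w j0
      · -- remove just C
        refine ⟨C, hCsub, by omega, ?_⟩
        rw [h𝓛]
        refine ⟨hsubedge S (le_refl S), hmatch S (le_refl S), ?_⟩
        intro j
        rw [Finset.filter_insert]
        by_cases hj : c s(a, b) = j
        · rw [if_pos hj]
          have : (S.filter (fun e => c e = j)).card < w j := hj ▸ hlt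
          calc (insert s(a,b) (S.filter (fun e => c e = j))).card
              ≤ (S.filter (fun e => c e = j)).card + 1 := Finset.card_insert_le _ _
            _ ≤ w j := by omega
        · rw [if_neg hj]
          exact le_trans (Finset.card_le_card (Finset.filter_subset_filter _ hSY)) (hY3 j)
      · -- must also remove one edge of color j0
        push_neg at hlt
        have hXj0 : (X.filter (fun e => c e = j0)).card + 1 ≤ w j0 := by
          have h := hxX3 j0
          rw [Finset.filter_insert, if_pos rfl,
            Finset.card_insert_of_notMem (fun h' => hx (Finset.mem_filter.1 h').1)] at h
          exact h
        have hproper : (X.filter (fun e => c e = j0)).card <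
            (S.filter (fun e => c e = j0)).card := by omega
        have hns : ¬ (S.filter (fun e => c e = j0)) ⊆ (X.filter (fun e => c e = j0)) :=
          fun h => absurd (Finset.card_le_card h) (by omega)
        obtain ⟨d, hd⟩ := Finset.sdiff_nonempty.2 hns
        obtain ⟨hdS, hdX⟩ := Finset.mem_sdiff.1 hd
        obtain ⟨hdS', hdj0⟩ := Finset.mem_filter.1 hdS
        have hdXX : d ∉ X := fun h => hdX (Finset.mem_filter.2 ⟨h, hdj0⟩)
        refine ⟨insert d C, ?_, ?_, ?_⟩
        · exact Finset.insert_subset (Finset.mem_sdiff.2 ⟨hSY hdS', hdXX⟩) hCsub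
        · calc (insert d C).card ≤ C.card + 1 := Finset.card_insert_le _ _
            _ ≤ 3 := by omega
        · have hT : Y \ insert d C = S.erase d := by
            rw [Finset.sdiff_insert]
          rw [hT, h𝓛]
          refine ⟨hsubedge _ (Finset.erase_subset _ _), hmatch _ (Finset.erase_subset _ _), ?_⟩
          intro j
          rw [Finset.filter_insert]
          by_cases hj : c s(a, b) = j
          · rw [if_pos hj]
            have hfe : (S.erase d).filter (fun e => c e = j) =
                (S.filter (fun e => c e = j)).erase d := Finset.filter_erase _ _ _
            have hd' : d ∈ S.filter (fun e => c e = j) :=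
              Finset.mem_filter.2 ⟨hdS', by rw [← hj]; exact hdj0⟩
            have hce : ((S.filter (fun e => c e = j)).erase d).card =
                (S.filter (fun e => c e = j)).card - 1 := Finset.card_erase_of_mem hd'
            have hle : (S.filter (fun e => c e = j)).card ≤ w j :=
              le_trans (Finset.card_le_card (Finset.filter_subset_filter _ hSY)) (hY3 j)
            have hpos : 1 ≤ (S.filter (fun e => c e = j)).card :=
              Finset.card_pos.2 ⟨d, hd'⟩
            calc (insert s(a,b) ((S.erase d).filter (fun e => c e = j))).card
                ≤ ((S.erase d).filter (fun e => c e = j)).card + 1 := Finset.card_insert_le _ _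
              _ ≤ w j := by rw [hfe, hce]; omega
          · rw [if_neg hj]
            exact le_trans (Finset.card_le_card (Finset.filter_subset_filter _
              ((Finset.erase_subset _ _).trans hSY))) (hY3 j)
end

section
/- For the Bounded Color Matching problem with edge profits p : E → ℚ≥0, every greedy solution G of the subset system 𝓛 = { M ⊆ E : M is a matching and |M ∩ E_j| ≤ w_j for every color j } satisfies 3 · p(G) ≥ p(M) for every matching M with |M ∩ E_j| ≤ w_j for all j; that is, the greedy algorithm is a 1/3-approximation for weighted Bounded Color Matching. -/
/-- `Gr` is a greedy solution for the system `𝓛` with weights `p`: it belongs to `𝓛`, is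
maximal in `𝓛`, and admits an enumeration `g₁, …, g_t` such that each `gᵢ` has maximum
weight among all elements whose addition to `{g₁, …, g_{i-1}}` keeps the set in `𝓛`. -/
def IsGreedySolution {α : Type*} [DecidableEq α] (𝓛 : Finset α → Prop) (p : α → ℚ)
    (Gr : Finset α) : Prop :=
  𝓛 Gr ∧ (∀ Y, 𝓛 Y → Gr ⊆ Y → Y = Gr) ∧
  ∃ l : List α, l.Nodup ∧ l.toFinset = Gr ∧
    ∀ i : Fin l.length, ∀ e : α, e ∉ (l.take i).toFinset →
      𝓛 (insert e (l.take i).toFinset) → p e ≤ p (l.get i)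

/-- The greedy algorithm is a `1/3`-approximation for weighted Bounded Color Matching:
for any greedy solution `Gr` of the associated subset system and any matching `M`
respecting the color bounds, `3 · p(Gr) ≥ p(M)`. -/
theorem greedy_boundedColorMatching_third_approx
    {V : Type*} [Fintype V] [DecidableEq V]
    (G : SimpleGraph V) [DecidableRel G.Adj]
    (k : ℕ) (c : Sym2 V → Fin k) (w : Fin k → ℕ) (hw : ∀ j, 1 ≤ w j)
    (p : Sym2 V → ℚ) (hp : ∀ e, 0 ≤ p e)
    (𝓛 : Finset (Sym2 V) → Prop)
    (h𝓛 : ∀ M, 𝓛 M ↔ (M ⊆ G.edgeFinset ∧ IsMatchingSet M ∧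
      ∀ j, (M.filter (fun e => c e = j)).card ≤ w j))
    (Gr : Finset (Sym2 V)) (hgreedy : IsGreedySolution 𝓛 p Gr) :
    ∀ M : Finset (Sym2 V), M ⊆ G.edgeFinset → IsMatchingSet M →
      (∀ j, (M.filter (fun e => c e = j)).card ≤ w j) →
      ∑ e ∈ M, p e ≤ 3 * ∑ e ∈ Gr, p e := by
  classical
  obtain ⟨hGr, hmax, l, hnd, hlG, hgr⟩ := hgreedy
  intro M hME hMm hMw
  -- the system is hereditary
  have hered : ∀ A B : Finset (Sym2 V), A ⊆ B → 𝓛 B → 𝓛 A := by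
    intro A B hAB hB
    rw [h𝓛] at hB ⊢
    obtain ⟨h1, h2, h3⟩ := hB
    exact ⟨hAB.trans h1,
      fun e he f hf hne v hv => h2 e (hAB he) f (hAB hf) hne v hv,
      fun j => le_trans (Finset.card_le_card (Finset.filter_subset_filter _ hAB)) (h3 j)⟩
  have hGrE : Gr ⊆ G.edgeFinset := ((h𝓛 Gr).mp hGr).1
  -- prefixes
  have hTk : ∀ n : ℕ, (l.take n).toFinset ⊆ Gr := by
    intro n x hx
    rw [← hlG]
    rw [List.mem_toFinset] at hx ⊢
    exact List.mem_of_mem_take hx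
  have hTkmono : ∀ a b : ℕ, a ≤ b → (l.take a).toFinset ⊆ (l.take b).toFinset := by
    intro a b hab x hx
    rw [List.mem_toFinset] at hx ⊢
    have : l.take a = (l.take b).take a := by
      rw [List.take_take, min_eq_left hab]
    rw [this] at hx
    exact List.mem_of_mem_take hx
  have hgetGr : ∀ i : Fin l.length, l.get i ∈ Gr := by
    intro i
    rw [← hlG, List.mem_toFinset]
    exact List.get_mem l i
  have hnotin : ∀ i j : Fin l.length, (i : ℕ) ≤ j → l.get j ∉ (l.take (i : ℕ)).toFinset := by
    intro i j hij hmem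
    rw [List.mem_toFinset] at hmem
    have hd := List.disjoint_take_drop (l := l) hnd (le_refl (i : ℕ))
    apply hd hmem
    have hlen : (j : ℕ) - i < (l.drop (i : ℕ)).length := by
      rw [List.length_drop]; omega
    have : l.get j = (l.drop (i : ℕ))[(j : ℕ) - i] := by
      rw [List.getElem_drop]
      simp only [List.get_eq_getElem]
      congr 1
      omega
    rw [this]
    exact List.getElem_mem hlen
  -- weights along the greedy list are non-increasing
  have hmono : ∀ i j : Fin l.length, (i : ℕ) ≤ (j : ℕ) → p (l.get j) ≤ p (l.get i) := by
    intro i j hij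
    rcases eq_or_lt_of_le hij with h | h
    · rw [Fin.ext h]
    · apply hgr i (l.get j) (hnotin i j hij)
      apply hered _ Gr _ hGr
      intro x hx
      rcases Finset.mem_insert.mp hx with rfl | hx
      · exact hgetGr j
      · exact hTk _ hx
  -- prefix with one extra element
  have hTksucc : ∀ i : Fin l.length,
      (l.take ((i : ℕ) + 1)).toFinset = insert (l.get i) (l.take (i : ℕ)).toFinset := by
    intro i
    have : l.take ((i : ℕ) + 1) = l.take (i : ℕ) ++ [l.get i] := by
      rw [List.take_succ, List.getElem?_eq_getElem i.isLt]
      rfl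
    rw [this, List.toFinset_append]
    ext x
    simp [or_comm]
  -- trivial case: empty greedy list
  rcases Nat.eq_zero_or_pos l.length with hl0 | hpos
  · have hlnil : l = [] := List.eq_nil_of_length_eq_zero hl0
    have hGrempty : Gr = ∅ := by rw [← hlG, hlnil]; rfl
    have hMempty : M = ∅ := by
      by_contra hne
      obtain ⟨e, he⟩ := Finset.nonempty_iff_ne_empty.mpr hne
      have hsing : 𝓛 {e} := by
        rw [h𝓛]
        refine ⟨Finset.singleton_subset_iff.mpr (hME he), ?_, ?_⟩
        · intro a ha b hb hab
          rw [Finset.mem_singleton] at ha hb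
          exact absurd (ha.trans hb.symm) hab
        · intro j
          calc (Finset.filter (fun e => c e = j) {e}).card ≤ ({e} : Finset (Sym2 V)).card :=
                Finset.card_le_card (Finset.filter_subset _ _)
            _ = 1 := Finset.card_singleton e
            _ ≤ w j := hw j
      have := hmax {e} hsing (by rw [hGrempty]; exact Finset.empty_subset _)
      rw [hGrempty] at this
      exact absurd this (Finset.singleton_ne_empty e)
    rw [hMempty, hGrempty]
    simp
  -- main analysis: every edge of M is blocked by some greedy edge
  have main : ∀ e, ∃ i : Fin l.length, e ∈ M →
      p e ≤ p (l.get i) ∧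
      ((∃ v, v ∈ e ∧ v ∈ l.get i) ∨
        (((l.take ((i : ℕ) + 1)).toFinset.filter (fun f => c f = c e)).card = w (c e) ∧
         ((l.take (i : ℕ)).toFinset.filter (fun f => c f = c e)).card < w (c e))) := by
    intro e
    by_cases heM : e ∈ M
    swap
    · exact ⟨⟨0, hpos⟩, fun h => absurd h heM⟩
    by_cases heGr : e ∈ Gr
    · -- e itself appears in the greedy list
      rw [← hlG, List.mem_toFinset] at heGr
      obtain ⟨i, hi⟩ := List.mem_iff_get.mp heGr
      refine ⟨i, fun _ => ⟨by rw [hi], Or.inl ?_⟩⟩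
      rw [hi]
      exact ⟨e.out.1, Sym2.out_fst_mem e, Sym2.out_fst_mem e⟩
    · -- e was blocked at some step
      have hsing : 𝓛 (insert e (l.take 0).toFinset) := by
        rw [h𝓛]
        have : insert e (l.take 0).toFinset = {e} := rfl
        rw [this]
        refine ⟨Finset.singleton_subset_iff.mpr (hME heM), ?_, ?_⟩
        · intro a ha b hb hab
          rw [Finset.mem_singleton] at ha hb
          exact absurd (ha.trans hb.symm) hab
        · intro j
          calc (Finset.filter (fun e => c e = j) {e}).card ≤ ({e} : Finset (Sym2 V)).card :=
                Finset.card_le_card (Finset.filter_subset _ _)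
            _ = 1 := Finset.card_singleton e
            _ ≤ w j := hw j
      have hblocked : ¬ 𝓛 (insert e (l.take l.length).toFinset) := by
        rw [List.take_length, hlG]
        intro hins
        have := hmax _ hins (Finset.subset_insert _ _)
        apply heGr
        rw [← this]
        exact Finset.mem_insert_self _ _
      have hex : ∃ n, ¬ 𝓛 (insert e (l.take n).toFinset) := ⟨l.length, hblocked⟩
      set n0 := Nat.find hex with hn0
      have hn0spec : ¬ 𝓛 (insert e (l.take n0).toFinset) := Nat.find_spec hex
      have hn0le : n0 ≤ l.length := Nat.find_le hblocked
      have hn0pos : 0 < n0 := by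
        rcases Nat.eq_zero_or_pos n0 with h | h
        · rw [h] at hn0spec; exact absurd hsing hn0spec
        · exact h
      have hilt : n0 - 1 < l.length := by omega
      set i : Fin l.length := ⟨n0 - 1, hilt⟩ with hidef
      have hisucc : (i : ℕ) + 1 = n0 := by simp [hidef]; omega
      have hfeas : 𝓛 (insert e (l.take (i : ℕ)).toFinset) := by
        by_contra hcon
        have := Nat.find_min hex (m := (i : ℕ)) (by omega)
        exact this hcon
      have hnot : ¬ 𝓛 (insert e (l.take ((i : ℕ) + 1)).toFinset) := by
        rw [hisucc]; exact hn0spec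
      have henotin : e ∉ (l.take (i : ℕ)).toFinset := fun h => heGr (hTk _ h)
      have hple : p e ≤ p (l.get i) := hgr i e henotin hfeas
      refine ⟨i, fun _ => ⟨hple, ?_⟩⟩
      -- analyze the reason for blocking
      set A := (l.take (i : ℕ)).toFinset with hA
      set g := l.get i with hg
      have hsucceq : (l.take ((i : ℕ) + 1)).toFinset = insert g A := hTksucc i
      have hfeas' : 𝓛 (insert g A) := by
        rw [← hsucceq]; exact hered _ Gr (hTk _) hGr
      rw [hsucceq] at hnot
      rw [h𝓛] at hnot
      push_neg at hnot
      have hsubE : insert e (insert g A) ⊆ G.edgeFinset := by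
        intro x hx
        rcases Finset.mem_insert.mp hx with rfl | hx
        · exact hME heM
        rcases Finset.mem_insert.mp hx with rfl | hx
        · exact hGrE (hgetGr i)
        · exact hGrE (hTk _ hx)
      have heg : e ≠ g := fun h => heGr (h ▸ hgetGr i)
      by_cases hnm : IsMatchingSet (insert e (insert g A))
      case neg =>
        -- blocked for matching reasons: e shares a vertex with g
        left
        by_contra hsh
        push_neg at hsh
        apply hnm
        have hMg : IsMatchingSet (insert g A) := ((h𝓛 _).mp hfeas').2.1
        have hMe : IsMatchingSet (insert e A) := ((h𝓛 _).mp hfeas).2.1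
        intro a ha b hb hab v hva hvb
        rcases Finset.mem_insert.mp ha with rfl | ha
        · rcases Finset.mem_insert.mp hb with rfl | hb
          · exact hab rfl
          rcases Finset.mem_insert.mp hb with rfl | hb
          · exact hsh v hva hvb
          · exact hMe a (Finset.mem_insert_self _ _) b (Finset.mem_insert_of_mem hb) hab v hva hvb
        · rcases Finset.mem_insert.mp hb with rfl | hb
          · rcases Finset.mem_insert.mp ha with rfl | ha
            · exact hsh v hvb hva
            · exact hMe b (Finset.mem_insert_self _ _) a (Finset.mem_insert_of_mem ha)
                (Ne.symm hab) v hvb hva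
          · exact hMg a ha b hb hab v hva hvb
      case pos =>
        obtain ⟨j, hj⟩ := hnot hsubE hnm
        -- blocked for color reasons
        right
        have hcej : c e = j := by
          by_contra hcej
          have : Finset.filter (fun f => c f = j) (insert e (insert g A)) =
              Finset.filter (fun f => c f = j) (insert g A) := by
            rw [Finset.filter_insert, if_neg hcej]
          rw [this] at hj
          exact absurd (((h𝓛 _).mp hfeas').2.2 j) (not_le.mpr hj)
        subst hcej
        constructor
        · rw [hsucceq]
          have h1 : (Finset.filter (fun f => c f = c e) (insert e (insert g A))).card ≤
              (Finset.filter (fun f => c f = c e) (insert g A)).card + 1 := by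
            rw [Finset.filter_insert, if_pos rfl]
            exact Finset.card_insert_le _ _
          have h2 : (Finset.filter (fun f => c f = c e) (insert g A)).card ≤ w (c e) :=
            ((h𝓛 _).mp hfeas').2.2 (c e)
          omega
        · have h3 : (Finset.filter (fun f => c f = c e) (insert e A)).card ≤ w (c e) :=
            ((h𝓛 _).mp hfeas).2.2 (c e)
          have h4 : (Finset.filter (fun f => c f = c e) (insert e A)).card =
              (Finset.filter (fun f => c f = c e) A).card + 1 := by
            rw [Finset.filter_insert, if_pos rfl]
            rw [Finset.card_insert_of_notMem (fun h => henotin (Finset.mem_of_mem_filter _ h))]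
          have h5 : (Finset.filter (fun f => c f = c e) (insert e (insert g A))).card ≤
              (Finset.filter (fun f => c f = c e) (insert e (insert g A))).card := le_refl _
          -- card A filter < w (c e)
          omega
  choose F hF using main
  -- split M into vertex-blocked and color-blocked parts
  set Mv := M.filter (fun e => ∃ v, v ∈ e ∧ v ∈ l.get (F e)) with hMv
  set Mc := M.filter (fun e => ¬ ∃ v, v ∈ e ∧ v ∈ l.get (F e)) with hMc
  have hsplit : ∑ e ∈ M, p e = ∑ e ∈ Mv, p e + ∑ e ∈ Mc, p e :=
    (Finset.sum_filter_add_sum_filter_not M _ p).symm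
  -- vertex part
  have hv : ∑ e ∈ Mv, p e ≤ 2 * ∑ g ∈ Gr, p g := by
    have hmap : ∀ e ∈ Mv, l.get (F e) ∈ Gr := fun e _ => hgetGr (F e)
    rw [← Finset.sum_fiberwise_of_maps_to hmap p, Finset.mul_sum]
    apply Finset.sum_le_sum
    intro g hg
    have hfib : ∀ e ∈ Mv.filter (fun e => l.get (F e) = g), p e ≤ p g := by
      intro e he
      rw [Finset.mem_filter] at he
      obtain ⟨heMv, hge⟩ := he
      rw [hMv, Finset.mem_filter] at heMv
      have := (hF e heMv.1).1
      rwa [hge] at this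
    have hchoice : ∀ e ∈ Mv.filter (fun e => l.get (F e) = g), ∃ v, v ∈ e ∧ v ∈ g := by
      intro e he
      rw [Finset.mem_filter] at he
      obtain ⟨heMv, hge⟩ := he
      rw [hMv, Finset.mem_filter] at heMv
      obtain ⟨v, hv1, hv2⟩ := heMv.2
      exact ⟨v, hv1, hge ▸ hv2⟩
    have hMsub : ∀ e ∈ Mv.filter (fun e => l.get (F e) = g), e ∈ M := by
      intro e he
      rw [Finset.mem_filter] at he
      exact (Finset.mem_filter.mp (hMv ▸ he.1)).1
    have hcard : (Mv.filter (fun e => l.get (F e) = g)).card ≤ 2 := by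
      set vfun : Sym2 V → V := fun e =>
        if h : ∃ v, v ∈ e ∧ v ∈ g then h.choose else e.out.1 with hvfun
      have hvspec : ∀ e ∈ Mv.filter (fun e => l.get (F e) = g),
          vfun e ∈ e ∧ vfun e ∈ g := by
        intro e he
        have h := hchoice e he
        rw [hvfun]
        simp only [dif_pos h]
        exact h.choose_spec
      have hle2 : ({g.out.1, g.out.2} : Finset V).card ≤ 2 :=
        le_trans (Finset.card_insert_le _ _) (by simp)
      refine le_trans (Finset.card_le_card_of_injOn vfun ?_ ?_) hle2
      · intro e he
        have h := (hvspec e he).2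
        have hgeq : g = s(g.out.1, g.out.2) := by
          conv_lhs => rw [← Quot.out_eq g]
        rw [hgeq, Sym2.mem_iff] at h
        simpa using h
      · intro e he e' he' hveq
        by_contra hne
        exact hMm e (hMsub e he) e' (hMsub e' he') hne (vfun e)
          (hvspec e he).1 (hveq ▸ (hvspec e' he').1)
    calc ∑ e ∈ Mv.filter (fun e => l.get (F e) = g), p e
        ≤ (Mv.filter (fun e => l.get (F e) = g)).card • p g :=
          Finset.sum_le_card_nsmul _ _ _ hfib
      _ ≤ 2 * p g := by
          rw [nsmul_eq_mul]
          exact mul_le_mul_of_nonneg_right (by exact_mod_cast hcard) (hp g)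
  -- color part
  have hc : ∑ e ∈ Mc, p e ≤ ∑ g ∈ Gr, p g := by
    have h1 : ∑ e ∈ Mc, p e = ∑ j : Fin k, ∑ e ∈ Mc.filter (fun e => c e = j), p e :=
      (Finset.sum_fiberwise_of_maps_to (fun e _ => Finset.mem_univ (c e)) p).symm
    have h2 : ∑ g ∈ Gr, p g = ∑ j : Fin k, ∑ g ∈ Gr.filter (fun g => c g = j), p g :=
      (Finset.sum_fiberwise_of_maps_to (fun g _ => Finset.mem_univ (c g)) p).symm
    rw [h1, h2]
    apply Finset.sum_le_sum
    intro j _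
    by_cases hS : (Mc.filter (fun e => c e = j)).Nonempty
    swap
    · rw [Finset.not_nonempty_iff_eq_empty.mp hS]
      simp only [Finset.sum_empty]
      exact Finset.sum_nonneg (fun g _ => hp g)
    obtain ⟨e0, he0⟩ := hS
    rw [Finset.mem_filter] at he0
    obtain ⟨he0Mc, he0j⟩ := he0
    rw [hMc, Finset.mem_filter] at he0Mc
    obtain ⟨he0M, he0not⟩ := he0Mc
    have hcol0 := ((hF e0 he0M).2.resolve_left he0not)
    rw [he0j] at hcol0
    set i0 := F e0 with hi0
    have hconst : ∀ e ∈ Mc.filter (fun e => c e = j), F e = i0 := by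
      intro e he
      rw [Finset.mem_filter] at he
      obtain ⟨heMc, hej⟩ := he
      rw [hMc, Finset.mem_filter] at heMc
      obtain ⟨heM', henot⟩ := heMc
      have hcol := ((hF e heM').2.resolve_left henot)
      rw [hej] at hcol
      by_contra hne
      have hne' : (F e : ℕ) ≠ (i0 : ℕ) := fun h => hne (Fin.ext h)
      rcases lt_or_gt_of_ne hne' with hlt | hgt
      · have hsub : (l.take ((F e : ℕ) + 1)).toFinset ⊆ (l.take (i0 : ℕ)).toFinset :=
          hTkmono _ _ (by omega)
        have := Finset.card_le_card
          (Finset.filter_subset_filter (fun f => c f = j) hsub)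
        omega
      · have hsub : (l.take ((i0 : ℕ) + 1)).toFinset ⊆ (l.take (F e : ℕ)).toFinset :=
          hTkmono _ _ (by omega)
        have := Finset.card_le_card
          (Finset.filter_subset_filter (fun f => c f = j) hsub)
        omega
    have hple : ∀ e ∈ Mc.filter (fun e => c e = j), p e ≤ p (l.get i0) := by
      intro e he
      have heM' : e ∈ M := by
        rw [Finset.mem_filter] at he
        exact (Finset.mem_filter.mp (hMc ▸ he.1)).1
      have := (hF e heM').1
      rwa [hconst e he] at this
    set T := (l.take ((i0 : ℕ) + 1)).toFinset.filter (fun f => c f = j) with hT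
    have hTcard : T.card = w j := hcol0.1
    have hTlb : ∀ g ∈ T, p (l.get i0) ≤ p g := by
      intro g hgT
      rw [hT, Finset.mem_filter, List.mem_toFinset] at hgT
      obtain ⟨hgmem, _⟩ := hgT
      obtain ⟨t, ht1, ht2⟩ := List.mem_iff_getElem.mp hgmem
      rw [List.length_take] at ht1
      have htlen : t < l.length := by omega
      have hti0 : t ≤ (i0 : ℕ) := by omega
      have hgeq : g = l.get ⟨t, htlen⟩ := by
        rw [← ht2]
        simp
      rw [hgeq]
      exact hmono ⟨t, htlen⟩ i0 hti0
    have hTsub : T ⊆ Gr.filter (fun g => c g = j) := by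
      intro g hgT
      rw [hT, Finset.mem_filter] at hgT
      exact Finset.mem_filter.mpr ⟨hTk _ hgT.1, hgT.2⟩
    calc ∑ e ∈ Mc.filter (fun e => c e = j), p e
        ≤ (Mc.filter (fun e => c e = j)).card • p (l.get i0) :=
          Finset.sum_le_card_nsmul _ _ _ hple
      _ ≤ (w j : ℚ) * p (l.get i0) := by
          rw [nsmul_eq_mul]
          have hcard : (Mc.filter (fun e => c e = j)).card ≤ w j := by
            refine le_trans (Finset.card_le_card ?_) (hMw j)
            intro e he
            rw [Finset.mem_filter] at he ⊢
            exact ⟨(Finset.mem_filter.mp (hMc ▸ he.1)).1, he.2⟩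
          exact mul_le_mul_of_nonneg_right (by exact_mod_cast hcard) (hp _)
      _ = T.card • p (l.get i0) := by rw [hTcard, nsmul_eq_mul]
      _ ≤ ∑ g ∈ T, p g := Finset.card_nsmul_le_sum _ _ _ hTlb
      _ ≤ ∑ g ∈ Gr.filter (fun g => c g = j), p g :=
          Finset.sum_le_sum_of_subset_of_nonneg hTsub (fun g _ _ => hp g)
  rw [hsplit]
  linarith
end

section
/- Let G = (V, E) be a finite simple undirected graph, let x : E → ℝ≥0, and let 𝓛 be a laminar family of subsets of V such that every S ∈ 𝓛 has odd cardinality at least 3 and satisfies Σ_{e∈E(S)} x_e = (|S| − 1)/2. Then |𝓛| ≤ Σ_{e∈E} x_e. -/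
lemma key_count {V : Type*} [DecidableEq V] (𝓛 : Finset (Finset V)) (hlam : Laminar 𝓛)
    (hodd : ∀ S ∈ 𝓛, Odd S.card) (hthree : ∀ S ∈ 𝓛, 3 ≤ S.card) :
    ∀ n (S : Finset V), S.card ≤ n → (𝓛.filter (· ⊆ S)).Nonempty →
      2 * (𝓛.filter (· ⊆ S)).card + 1 ≤ S.card := by
  intro n
  induction n with
  | zero =>
    intro S hS ⟨T, hT⟩
    simp only [Finset.mem_filter] at hT
    have := hthree T hT.1
    have := Finset.card_le_card hT.2
    omega
  | succ n ih =>
    intro S hS hne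
    obtain ⟨M, hM, hMmax⟩ := Finset.exists_max_image (𝓛.filter (· ⊆ S)) Finset.card hne
    simp only [Finset.mem_filter] at hM
    by_cases hMS : M = S
    · -- S itself is a member
      subst hMS
      have hSL : M ∈ 𝓛 := hM.1
      by_cases hP : (𝓛.filter (· ⊂ M)).Nonempty
      · obtain ⟨M', hM', hmax'⟩ := Finset.exists_max_image (𝓛.filter (· ⊂ M)) Finset.card hP
        simp only [Finset.mem_filter] at hM'
        have hM'L : M' ∈ 𝓛 := hM'.1
        have hM'ss : M' ⊂ M := hM'.2
        have hM'ne : M'.Nonempty := Finset.card_pos.mp (by have := hthree M' hM'L; omega)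
        have hsplit : 𝓛.filter (· ⊆ M) =
            insert M ((𝓛.filter (· ⊆ M')) ∪ (𝓛.filter (· ⊆ M \ M'))) := by
          ext T
          simp only [Finset.mem_insert, Finset.mem_union, Finset.mem_filter]
          constructor
          · rintro ⟨hTL, hTS⟩
            by_cases hTM : T = M
            · exact Or.inl hTM
            · have hTss : T ⊂ M := (Finset.ssubset_iff_subset_ne.mpr ⟨hTS, hTM⟩)
              rcases hlam T hTL M' hM'L with h | h | h
              · exact Or.inr (Or.inl ⟨hTL, h⟩)
              · have hTP : T ∈ 𝓛.filter (· ⊂ M) := Finset.mem_filter.mpr ⟨hTL, hTss⟩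
                have := hmax' T hTP
                have : T = M' := (Finset.eq_of_subset_of_card_le h this).symm
                exact Or.inr (Or.inl ⟨hTL, this ▸ Finset.Subset.refl _⟩)
              · exact Or.inr (Or.inr ⟨hTL, Finset.subset_sdiff.mpr ⟨hTss.subset, h⟩⟩)
          · rintro (rfl | ⟨hTL, hTM'⟩ | ⟨hTL, hTM'⟩)
            · exact ⟨hSL, Finset.Subset.refl _⟩
            · exact ⟨hTL, hTM'.trans hM'ss.subset⟩
            · exact ⟨hTL, hTM'.trans (Finset.sdiff_subset)⟩
        have hMnotin : M ∉ (𝓛.filter (· ⊆ M')) ∪ (𝓛.filter (· ⊆ M \ M')) := by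
          simp only [Finset.mem_union, Finset.mem_filter]
          rintro (⟨-, h⟩ | ⟨-, h⟩)
          · exact hM'ss.not_subset h
          · obtain ⟨a, ha⟩ := hM'ne
            have haM : a ∈ M := hM'ss.subset ha
            have := h haM
            simp only [Finset.mem_sdiff] at this
            exact this.2 ha
        have hdisj : Disjoint (𝓛.filter (· ⊆ M')) (𝓛.filter (· ⊆ M \ M')) := by
          rw [Finset.disjoint_left]
          intro T hT1 hT2
          simp only [Finset.mem_filter] at hT1 hT2
          obtain ⟨a, ha⟩ := Finset.card_pos.mp (by have := hthree T hT1.1; omega : 0 < T.card)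
          have h1 := hT1.2 ha
          have h2 := hT2.2 ha
          simp only [Finset.mem_sdiff] at h2
          exact h2.2 h1
        have hcard : (𝓛.filter (· ⊆ M)).card =
            1 + (𝓛.filter (· ⊆ M')).card + (𝓛.filter (· ⊆ M \ M')).card := by
          rw [hsplit, Finset.card_insert_of_notMem hMnotin, Finset.card_union_of_disjoint hdisj]
          ring
        -- apply IH
        have hM'card : M'.card ≤ n := by
          have := Finset.card_lt_card hM'ss; omega
        have hne1 : (𝓛.filter (· ⊆ M')).Nonempty :=
          ⟨M', Finset.mem_filter.mpr ⟨hM'L, Finset.Subset.refl _⟩⟩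
        have ih1 := ih M' hM'card hne1
        have hsd : (M \ M').card = M.card - M'.card := Finset.card_sdiff_of_subset hM'ss.subset
        have h3M' := hthree M' hM'L
        have hsdn : (M \ M').card ≤ n := by omega
        obtain ⟨a, hA⟩ := hodd M hSL
        obtain ⟨b, hB⟩ := hodd M' hM'L
        have hlt := Finset.card_lt_card hM'ss
        by_cases hne2 : (𝓛.filter (· ⊆ M \ M')).Nonempty
        · have ih2 := ih (M \ M') hsdn hne2
          omega
        · have : (𝓛.filter (· ⊆ M \ M')).card = 0 := by
            rw [Finset.card_eq_zero, Finset.not_nonempty_iff_eq_empty.mp hne2]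
          omega
      · -- no proper member: filter = {M}
        have : 𝓛.filter (· ⊆ M) = {M} := by
          ext T
          simp only [Finset.mem_filter, Finset.mem_singleton]
          constructor
          · rintro ⟨hTL, hTS⟩
            by_contra hTM
            exact hP ⟨T, Finset.mem_filter.mpr ⟨hTL, (Finset.ssubset_iff_subset_ne.mpr ⟨hTS, hTM⟩)⟩⟩
          · rintro rfl; exact ⟨hSL, Finset.Subset.refl _⟩
        rw [this, Finset.card_singleton]
        have := hthree M hSL
        omega
    · -- M is a proper subset of S
      have hMss : M ⊂ S := (Finset.ssubset_iff_subset_ne.mpr ⟨hM.2, hMS⟩)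
      have hsplit : 𝓛.filter (· ⊆ S) = (𝓛.filter (· ⊆ M)) ∪ (𝓛.filter (· ⊆ S \ M)) := by
        ext T
        simp only [Finset.mem_union, Finset.mem_filter]
        constructor
        · rintro ⟨hTL, hTS⟩
          rcases hlam T hTL M hM.1 with h | h | h
          · exact Or.inl ⟨hTL, h⟩
          · have hTin : T ∈ 𝓛.filter (· ⊆ S) := Finset.mem_filter.mpr ⟨hTL, hTS⟩
            have := hMmax T hTin
            have : T = M := (Finset.eq_of_subset_of_card_le h this).symm
            exact Or.inl ⟨hTL, this ▸ Finset.Subset.refl _⟩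
          · exact Or.inr ⟨hTL, Finset.subset_sdiff.mpr ⟨hTS, h⟩⟩
        · rintro (⟨hTL, h⟩ | ⟨hTL, h⟩)
          · exact ⟨hTL, h.trans hMss.subset⟩
          · exact ⟨hTL, h.trans (Finset.sdiff_subset)⟩
      have hdisj : Disjoint (𝓛.filter (· ⊆ M)) (𝓛.filter (· ⊆ S \ M)) := by
        rw [Finset.disjoint_left]
        intro T hT1 hT2
        simp only [Finset.mem_filter] at hT1 hT2
        obtain ⟨a, ha⟩ := Finset.card_pos.mp (by have := hthree T hT1.1; omega : 0 < T.card)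
        have h1 := hT1.2 ha
        have h2 := hT2.2 ha
        simp only [Finset.mem_sdiff] at h2
        exact h2.2 h1
      have hcard : (𝓛.filter (· ⊆ S)).card =
          (𝓛.filter (· ⊆ M)).card + (𝓛.filter (· ⊆ S \ M)).card := by
        rw [hsplit, Finset.card_union_of_disjoint hdisj]
      have h3M := hthree M hM.1
      have hlt := Finset.card_lt_card hMss
      have hMn : M.card ≤ n := by omega
      have hne1 : (𝓛.filter (· ⊆ M)).Nonempty :=
        ⟨M, Finset.mem_filter.mpr ⟨hM.1, Finset.Subset.refl _⟩⟩
      have ih1 := ih M hMn hne1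
      have hsd : (S \ M).card = S.card - M.card := Finset.card_sdiff_of_subset hMss.subset
      have hsdn : (S \ M).card ≤ n := by omega
      by_cases hne2 : (𝓛.filter (· ⊆ S \ M)).Nonempty
      · have ih2 := ih (S \ M) hsdn hne2
        omega
      · have : (𝓛.filter (· ⊆ S \ M)).card = 0 := by
          rw [Finset.card_eq_zero, Finset.not_nonempty_iff_eq_empty.mp hne2]
        omega

/-- If `x : E → ℝ≥0` and `𝓛` is a laminar family of odd-cardinality vertex sets, each of
cardinality at least 3, with `∑_{e ∈ E(S)} x_e = (|S| - 1)/2` for every `S ∈ 𝓛`, then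
`|𝓛| ≤ ∑_{e ∈ E} x_e`.  Here `E(S)` is the set of edges with both endpoints in `S`. -/
theorem tight_laminar_card_le {V : Type*} [Fintype V] [DecidableEq V]
    (G : SimpleGraph V) [DecidableRel G.Adj]
    (x : Sym2 V → ℝ) (hx : ∀ e ∈ G.edgeFinset, 0 ≤ x e)
    (𝓛 : Finset (Finset V)) (hlam : Laminar 𝓛)
    (hodd : ∀ S ∈ 𝓛, Odd S.card) (hthree : ∀ S ∈ 𝓛, 3 ≤ S.card)
    (htight : ∀ S ∈ 𝓛, ∑ e ∈ G.edgeFinset ∩ S.sym2, x e = ((S.card : ℝ) - 1) / 2) :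
    (𝓛.card : ℝ) ≤ ∑ e ∈ G.edgeFinset, x e := by
  classical
  set 𝓜 := 𝓛.filter (fun M => ∀ T ∈ 𝓛, M ⊆ T → M = T) with h𝓜
  -- every member is contained in some maximal member
  have hcover : ∀ T ∈ 𝓛, ∃ M ∈ 𝓜, T ⊆ M := by
    intro T hT
    obtain ⟨M, hM, hMmax⟩ := Finset.exists_max_image (𝓛.filter (T ⊆ ·)) Finset.card
      ⟨T, Finset.mem_filter.mpr ⟨hT, Finset.Subset.refl _⟩⟩
    simp only [Finset.mem_filter] at hM
    refine ⟨M, Finset.mem_filter.mpr ⟨hM.1, ?_⟩, hM.2⟩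
    intro T' hT' hMT'
    have : T' ∈ 𝓛.filter (T ⊆ ·) := Finset.mem_filter.mpr ⟨hT', hM.2.trans hMT'⟩
    exact Finset.eq_of_subset_of_card_le hMT' (hMmax T' this)
  -- maximal members are pairwise disjoint
  have hMdisj : ∀ M₁ ∈ 𝓜, ∀ M₂ ∈ 𝓜, M₁ ≠ M₂ → Disjoint M₁ M₂ := by
    intro M₁ hM₁ M₂ hM₂ hne
    simp only [h𝓜, Finset.mem_filter] at hM₁ hM₂
    rcases hlam M₁ hM₁.1 M₂ hM₂.1 with h | h | h
    · exact absurd (hM₁.2 M₂ hM₂.1 h) hne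
    · exact absurd (hM₂.2 M₁ hM₁.1 h).symm hne
    · exact h
  have hMsub : ∀ M ∈ 𝓜, M ∈ 𝓛 := fun M hM => (Finset.mem_filter.mp hM).1
  -- decompose 𝓛
  have hbi : 𝓛 = 𝓜.biUnion (fun M => 𝓛.filter (· ⊆ M)) := by
    ext T
    simp only [Finset.mem_biUnion, Finset.mem_filter]
    constructor
    · intro hT
      obtain ⟨M, hM, hTM⟩ := hcover T hT
      exact ⟨M, hM, hT, hTM⟩
    · rintro ⟨M, -, hT, -⟩; exact hT
  have hpair : ∀ M₁ ∈ 𝓜, ∀ M₂ ∈ 𝓜, M₁ ≠ M₂ →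
      Disjoint (𝓛.filter (· ⊆ M₁)) (𝓛.filter (· ⊆ M₂)) := by
    intro M₁ hM₁ M₂ hM₂ hne
    rw [Finset.disjoint_left]
    intro T hT1 hT2
    simp only [Finset.mem_filter] at hT1 hT2
    obtain ⟨a, ha⟩ := Finset.card_pos.mp (by have := hthree T hT1.1; omega : 0 < T.card)
    exact Finset.disjoint_left.mp (hMdisj M₁ hM₁ M₂ hM₂ hne) (hT1.2 ha) (hT2.2 ha)
  have hcard : 𝓛.card = ∑ M ∈ 𝓜, (𝓛.filter (· ⊆ M)).card := by
    conv_lhs => rw [hbi]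
    exact Finset.card_biUnion hpair
  -- per maximal member bound
  have hbound : ∀ M ∈ 𝓜, ((𝓛.filter (· ⊆ M)).card : ℝ) ≤ ∑ e ∈ G.edgeFinset ∩ M.sym2, x e := by
    intro M hM
    have hML := hMsub M hM
    have hk := key_count 𝓛 hlam hodd hthree M.card M le_rfl
      ⟨M, Finset.mem_filter.mpr ⟨hML, Finset.Subset.refl _⟩⟩
    rw [htight M hML]
    have h3 := hthree M hML
    have : ((𝓛.filter (· ⊆ M)).card : ℝ) ≤ ((M.card : ℝ) - 1) / 2 := by
      rw [le_div_iff₀ (by norm_num : (0:ℝ) < 2)]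
      push_cast
      have : (2 * (𝓛.filter (· ⊆ M)).card + 1 : ℝ) ≤ (M.card : ℝ) := by exact_mod_cast hk
      linarith
    exact this
  -- edge sets of distinct maximal members are disjoint
  have hedisj : ∀ M₁ ∈ 𝓜, ∀ M₂ ∈ 𝓜, M₁ ≠ M₂ →
      Disjoint (G.edgeFinset ∩ M₁.sym2) (G.edgeFinset ∩ M₂.sym2) := by
    intro M₁ hM₁ M₂ hM₂ hne
    rw [Finset.disjoint_left]
    intro e he1 he2
    simp only [Finset.mem_inter] at he1 he2
    induction e using Sym2.ind with
    | _ a b =>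
      rw [Finset.mk_mem_sym2_iff] at he1 he2
      exact Finset.disjoint_left.mp (hMdisj M₁ hM₁ M₂ hM₂ hne) he1.2.1 he2.2.1
  calc (𝓛.card : ℝ) = ∑ M ∈ 𝓜, ((𝓛.filter (· ⊆ M)).card : ℝ) := by rw [hcard]; push_cast; rfl
    _ ≤ ∑ M ∈ 𝓜, ∑ e ∈ G.edgeFinset ∩ M.sym2, x e := Finset.sum_le_sum hbound
    _ = ∑ e ∈ 𝓜.biUnion (fun M => G.edgeFinset ∩ M.sym2), x e :=
        (Finset.sum_biUnion hedisj).symm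
    _ ≤ ∑ e ∈ G.edgeFinset, x e := by
        apply Finset.sum_le_sum_of_subset_of_nonneg
        · intro e he
          simp only [Finset.mem_biUnion, Finset.mem_inter] at he
          obtain ⟨M, -, he, -⟩ := he
          exact he
        · intro e he _; exact hx e he
end

section
/- Let G = (V, E) be a finite simple undirected graph with edge colors and integer color bounds w_j ≥ 1, and let x : E → (0, 1] satisfy Σ_{e∈δ(v)} x_e ≤ 1 for all v ∈ V. Suppose there exist: a set F ⊆ V with Σ_{e∈δ(v)} x_e = 1 for all v ∈ F; a laminar family 𝓛 of odd-cardinality subsets S ⊆ V with |S| ≥ 3 and Σ_{e∈E(S)} x_e = (|S| − 1)/2 for all S ∈ 𝓛; and a set Q of colors with Σ_{e∈E_j} x_e = w_j for all j ∈ Q; such that |E| = |F| + |𝓛| + |Q|. Then |E| ≤ 4 · Σ_{e∈E} x_e. -/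
open Finset

section Aux
variable {α : Type*} [DecidableEq α]

/-- The maximal elements of a finite family of finite sets. -/
def maxl (𝓛 : Finset (Finset α)) : Finset (Finset α) :=
  𝓛.filter (fun T => ∀ S ∈ 𝓛, T ⊆ S → S = T)

lemma maxl_subset (𝓛 : Finset (Finset α)) : maxl 𝓛 ⊆ 𝓛 := filter_subset _ _

lemma laminar_subset {𝓛 𝓛' : Finset (Finset α)} (h : 𝓛' ⊆ 𝓛) (hl : Laminar 𝓛) : Laminar 𝓛' :=
  fun S hS T hT => hl S (h hS) T (h hT)

lemma maxl_pairwise_disjoint {𝓛 : Finset (Finset α)} (hl : Laminar 𝓛) :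
    ∀ S ∈ maxl 𝓛, ∀ T ∈ maxl 𝓛, S ≠ T → Disjoint S T := by
  intro S hS T hT hne
  simp only [maxl, mem_filter] at hS hT
  rcases hl S hS.1 T hT.1 with h | h | h
  · exact absurd (hS.2 T hT.1 h).symm hne
  · exact absurd (hT.2 S hS.1 h) hne
  · exact h

lemma even_sum_card {β : Type*} (s : Finset β) (f : β → ℕ) (h : ∀ i ∈ s, Odd (f i)) :
    Even (∑ i ∈ s, f i + s.card) := by
  classical
  induction s using Finset.induction_on with
  | empty => simp
  | insert a s ha ih =>
    rw [Finset.sum_insert ha, Finset.card_insert_of_notMem ha]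
    obtain ⟨u, hu⟩ := h a (mem_insert_self a s)
    obtain ⟨v, hv⟩ := ih (fun i hi => h i (mem_insert_of_mem hi))
    exact ⟨u + v + 1, by omega⟩

/-- Key combinatorial lemma: a laminar family of odd sets of size ≥ 3 satisfies
`2|𝓛| + |maxl 𝓛| ≤ ∑_{T ∈ maxl 𝓛} |T|`. -/
lemma lamB : ∀ (𝓛 : Finset (Finset α)), Laminar 𝓛 → (∀ S ∈ 𝓛, Odd S.card) →
    (∀ S ∈ 𝓛, 3 ≤ S.card) →
    2 * 𝓛.card + (maxl 𝓛).card ≤ ∑ T ∈ maxl 𝓛, T.card := by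
  intro 𝓛
  induction 𝓛 using Finset.strongInduction with
  | _ 𝓛 ih =>
    intro hl hodd h3
    rcases 𝓛.eq_empty_or_nonempty with rfl | hne
    · simp [maxl]
    obtain ⟨T, hT, hTmax⟩ := 𝓛.exists_max_image Finset.card hne
    have hTmaxl : T ∈ maxl 𝓛 := by
      simp only [maxl, mem_filter]
      exact ⟨hT, fun S hS hsub => (Finset.eq_of_subset_of_card_le hsub (hTmax S hS)).symm⟩
    classical
    set A : Finset (Finset α) := 𝓛.filter (fun S => S ⊆ T) with hAdef
    set B : Finset (Finset α) := 𝓛.filter (fun S => ¬ S ⊆ T) with hBdef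
    set A' : Finset (Finset α) := A.erase T with hA'def
    have hTA : T ∈ A := mem_filter.mpr ⟨hT, subset_rfl⟩
    have hTnotA' : T ∉ A' := notMem_erase T A
    have hTnotB : T ∉ B := by simp [hBdef]
    have hA'sub : A' ⊆ 𝓛 := (erase_subset _ _).trans (filter_subset _ _)
    have hBsub : B ⊆ 𝓛 := filter_subset _ _
    have hA'ss : A' ⊂ 𝓛 := (Finset.ssubset_iff_of_subset hA'sub).mpr ⟨T, hT, hTnotA'⟩
    have hBss : B ⊂ 𝓛 := (Finset.ssubset_iff_of_subset hBsub).mpr ⟨T, hT, hTnotB⟩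
    have ihA := ih A' hA'ss (laminar_subset hA'sub hl)
      (fun S hS => hodd S (hA'sub hS)) (fun S hS => h3 S (hA'sub hS))
    have ihB := ih B hBss (laminar_subset hBsub hl)
      (fun S hS => hodd S (hBsub hS)) (fun S hS => h3 S (hBsub hS))
    -- maxl 𝓛 = insert T (maxl B)
    have hmaxl_eq : maxl 𝓛 = insert T (maxl B) := by
      ext S
      simp only [maxl, mem_filter, mem_insert, hBdef]
      constructor
      · rintro ⟨hS𝓛, hSmax⟩
        by_cases hST : S = T
        · exact Or.inl hST
        · refine Or.inr ⟨⟨hS𝓛, ?_⟩, fun R hR hsub => hSmax R hR.1 hsub⟩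
          intro hsub
          exact hST (hSmax T hT hsub).symm
      · rintro (rfl | ⟨⟨hS𝓛, hnsub⟩, hSmax⟩)
        · simpa [maxl, mem_filter] using hTmaxl
        · refine ⟨hS𝓛, fun R hR hsub => ?_⟩
          have hRB : ¬ R ⊆ T := fun hRT => hnsub (hsub.trans hRT)
          exact hSmax R ⟨hR, hRB⟩ hsub
    have hTnotmaxlB : T ∉ maxl B := fun h => hTnotB (maxl_subset B h)
    have hsum_eq : ∑ R ∈ maxl 𝓛, R.card = T.card + ∑ R ∈ maxl B, R.card := by
      rw [hmaxl_eq, Finset.sum_insert hTnotmaxlB]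
    have hcard_eq : (maxl 𝓛).card = 1 + (maxl B).card := by
      rw [hmaxl_eq, Finset.card_insert_of_notMem hTnotmaxlB]; omega
    have hLcard : 𝓛.card = A'.card + 1 + B.card := by
      have h1 : A.card + B.card = 𝓛.card :=
        Finset.card_filter_add_card_filter_not (p := fun S => S ⊆ T)
      have h2 : A'.card + 1 = A.card := Finset.card_erase_add_one hTA
      omega
    -- analysis of maxl A'
    have hA'subT : ∀ R ∈ maxl A', R ⊆ T := by
      intro R hR
      have := maxl_subset A' hR
      exact (mem_filter.mp (Finset.erase_subset T A this)).2
    have hSle : ∑ R ∈ maxl A', R.card ≤ T.card := by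
      rw [← Finset.card_biUnion (maxl_pairwise_disjoint (laminar_subset hA'sub hl))]
      refine Finset.card_le_card ?_
      intro a ha
      obtain ⟨R, hR, haR⟩ := Finset.mem_biUnion.mp ha
      exact hA'subT R hR haR
    have hpar : Even (∑ R ∈ maxl A', R.card + (maxl A').card) :=
      even_sum_card _ _ (fun R hR => hodd R (hA'sub (maxl_subset A' hR)))
    obtain ⟨tp, htp⟩ := hodd T hT
    have hT3 := h3 T hT
    have hm1 : ∀ R ∈ maxl A', R.card + 2 ≤ T.card := by
      intro R hR
      have hRA' := maxl_subset A' hR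
      have hRT : R ⊆ T := hA'subT R hR
      have hRne : R ≠ T := Finset.ne_of_mem_erase hRA'
      have hlt : R.card < T.card := Finset.card_lt_card (ssubset_of_subset_of_ne hRT hRne)
      obtain ⟨u, hu⟩ := hodd R (hA'sub hRA')
      omega
    have hkey : ∑ R ∈ maxl A', R.card + 3 ≤ T.card + (maxl A').card := by
      rcases Nat.lt_or_ge (maxl A').card 2 with hm | hm
      · interval_cases h : (maxl A').card
        · rw [Finset.card_eq_zero.mp h]; simp; omega
        · obtain ⟨R, hRdef⟩ := Finset.card_eq_one.mp h
          rw [hRdef, Finset.sum_singleton]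
          have := hm1 R (hRdef ▸ Finset.mem_singleton_self R)
          omega
      · obtain ⟨u, hu⟩ := hpar
        omega
    omega

end Aux

/-- Support-size bound for basic feasible solutions (general graphs): if
`x : E → (0,1]` has degree sums at most 1, and there are a vertex set `F` of tight
vertices, a laminar family `𝓛` of tight odd-cardinality sets (each of size ≥ 3), and a
set `Q` of tight colors with `|E| = |F| + |𝓛| + |Q|`, then `|E| ≤ 4 · ∑_{e ∈ E} x_e`. -/
theorem support_card_le_four_opt {V : Type*} [Fintype V] [DecidableEq V]
    (G : SimpleGraph V) [DecidableRel G.Adj]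
    (k : ℕ) (c : Sym2 V → Fin k) (w : Fin k → ℕ) (hw : ∀ j, 1 ≤ w j)
    (x : Sym2 V → ℝ) (hx : ∀ e ∈ G.edgeFinset, 0 < x e ∧ x e ≤ 1)
    (hdeg : ∀ v : V, ∑ e ∈ G.edgeFinset.filter (fun e => v ∈ e), x e ≤ 1)
    (F : Finset V)
    (hF : ∀ v ∈ F, ∑ e ∈ G.edgeFinset.filter (fun e => v ∈ e), x e = 1)
    (𝓛 : Finset (Finset V)) (hlam : Laminar 𝓛)
    (hodd : ∀ S ∈ 𝓛, Odd S.card) (hthree : ∀ S ∈ 𝓛, 3 ≤ S.card)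
    (h𝓛tight : ∀ S ∈ 𝓛, ∑ e ∈ G.edgeFinset ∩ S.sym2, x e = ((S.card : ℝ) - 1) / 2)
    (Q : Finset (Fin k))
    (hQtight : ∀ j ∈ Q, ∑ e ∈ G.edgeFinset.filter (fun e => c e = j), x e = (w j : ℝ))
    (hcount : G.edgeFinset.card = F.card + 𝓛.card + Q.card) :
    (G.edgeFinset.card : ℝ) ≤ 4 * ∑ e ∈ G.edgeFinset, x e := by
  classical
  have hxnn : ∀ e ∈ G.edgeFinset, 0 ≤ x e := fun e he => (hx e he).1.le
  -- F bound : |F| ≤ 2 ∑ x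
  have hFle : (F.card : ℝ) ≤ 2 * ∑ e ∈ G.edgeFinset, x e := by
    have h1 : (F.card : ℝ) = ∑ v ∈ F, ∑ e ∈ G.edgeFinset, (if v ∈ e then x e else 0) := by
      calc (F.card : ℝ) = ∑ _v ∈ F, (1:ℝ) := by simp
      _ = _ := Finset.sum_congr rfl (fun v hv => by rw [← hF v hv, Finset.sum_filter])
    rw [h1, Finset.sum_comm]
    have hb : ∀ e ∈ G.edgeFinset, ∑ v ∈ F, (if v ∈ e then x e else 0) ≤ 2 * x e := by
      intro e he
      have heq : ∑ v ∈ F, (if v ∈ e then x e else 0)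
          = ((F.filter (fun v => v ∈ e)).card : ℝ) * x e := by
        rw [← Finset.sum_filter, Finset.sum_const, nsmul_eq_mul]
      rw [heq]
      have hc : (F.filter (fun v => v ∈ e)).card ≤ 2 := by
        induction e using Sym2.inductionOn with
        | _ a b =>
          have hsub : F.filter (fun v => v ∈ s(a,b)) ⊆ {a, b} := by
            intro v hv
            simp only [Finset.mem_filter, Sym2.mem_iff] at hv
            simp only [Finset.mem_insert, Finset.mem_singleton]
            tauto
          calc (F.filter (fun v => v ∈ s(a,b))).card ≤ ({a,b} : Finset V).card :=
                Finset.card_le_card hsub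
          _ ≤ 2 := Finset.card_insert_le a {b}
      have hxe := hxnn e he
      have : ((F.filter (fun v => v ∈ e)).card : ℝ) ≤ 2 := by exact_mod_cast hc
      nlinarith
    calc ∑ e ∈ G.edgeFinset, ∑ v ∈ F, (if v ∈ e then x e else 0)
        ≤ ∑ e ∈ G.edgeFinset, 2 * x e := Finset.sum_le_sum hb
    _ = 2 * ∑ e ∈ G.edgeFinset, x e := by rw [Finset.mul_sum]
  -- Q bound : |Q| ≤ ∑ x
  have hQle : (Q.card : ℝ) ≤ ∑ e ∈ G.edgeFinset, x e := by
    have h1 : (Q.card : ℝ) ≤ ∑ j ∈ Q, (w j : ℝ) := by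
      calc (Q.card : ℝ) = ∑ _j ∈ Q, (1:ℝ) := by simp
      _ ≤ _ := Finset.sum_le_sum (fun j _ => by exact_mod_cast hw j)
    have hdisj : Set.PairwiseDisjoint ↑Q (fun j => G.edgeFinset.filter (fun e => c e = j)) := by
      intro j _ j' _ hne
      refine Finset.disjoint_left.mpr ?_
      intro e he he'
      simp only [Finset.mem_filter] at he he'
      exact hne (he.2 ▸ he'.2 ▸ rfl)
    have h2 : ∑ j ∈ Q, ∑ e ∈ G.edgeFinset.filter (fun e => c e = j), x e
        = ∑ e ∈ Q.biUnion (fun j => G.edgeFinset.filter (fun e => c e = j)), x e :=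
      (Finset.sum_biUnion hdisj).symm
    have h3 : Q.biUnion (fun j => G.edgeFinset.filter (fun e => c e = j)) ⊆ G.edgeFinset :=
      Finset.biUnion_subset.mpr (fun j _ => Finset.filter_subset _ _)
    have h4 := Finset.sum_le_sum_of_subset_of_nonneg h3 (fun e he _ => hxnn e he)
    have h5 : ∑ j ∈ Q, (w j : ℝ) = ∑ j ∈ Q, ∑ e ∈ G.edgeFinset.filter (fun e => c e = j), x e :=
      Finset.sum_congr rfl (fun j hj => (hQtight j hj).symm)
    linarith
  -- 𝓛 bound : |𝓛| ≤ ∑ x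
  have h𝓛le : (𝓛.card : ℝ) ≤ ∑ e ∈ G.edgeFinset, x e := by
    have hkey := lamB 𝓛 hlam hodd hthree
    have hdisj : Set.PairwiseDisjoint ↑(maxl 𝓛)
        (fun S : Finset V => G.edgeFinset ∩ S.sym2) := by
      intro S hS T hT hne
      have hST := maxl_pairwise_disjoint hlam S hS T hT hne
      refine Finset.disjoint_left.mpr ?_
      intro e he he'
      have h1 : e.out.1 ∈ S := (Finset.mem_sym2_iff.mp (Finset.mem_inter.mp he).2) _
        (Sym2.out_fst_mem e)
      have h2 : e.out.1 ∈ T := (Finset.mem_sym2_iff.mp (Finset.mem_inter.mp he').2) _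
        (Sym2.out_fst_mem e)
      exact Finset.disjoint_left.mp hST h1 h2
    have h2 : ∑ S ∈ maxl 𝓛, ∑ e ∈ G.edgeFinset ∩ S.sym2, x e
        = ∑ e ∈ (maxl 𝓛).biUnion (fun S => G.edgeFinset ∩ S.sym2), x e :=
      (Finset.sum_biUnion hdisj).symm
    have h3 : (maxl 𝓛).biUnion (fun S => G.edgeFinset ∩ S.sym2) ⊆ G.edgeFinset :=
      Finset.biUnion_subset.mpr (fun S _ => Finset.inter_subset_left)
    have h4 := Finset.sum_le_sum_of_subset_of_nonneg h3 (fun e he _ => hxnn e he)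
    have h5 : ∑ S ∈ maxl 𝓛, ((S.card : ℝ) - 1) / 2
        = ∑ S ∈ maxl 𝓛, ∑ e ∈ G.edgeFinset ∩ S.sym2, x e :=
      Finset.sum_congr rfl (fun S hS => (h𝓛tight S (maxl_subset 𝓛 hS)).symm)
    have h6 : (2 * 𝓛.card + (maxl 𝓛).card : ℝ) ≤ ∑ S ∈ maxl 𝓛, (S.card : ℝ) := by
      exact_mod_cast (by exact_mod_cast hkey :
        ((2 * 𝓛.card + (maxl 𝓛).card : ℕ) : ℝ) ≤ ((∑ T ∈ maxl 𝓛, T.card : ℕ) : ℝ))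
    have h7 : ∑ S ∈ maxl 𝓛, ((S.card : ℝ) - 1) / 2
        = (∑ S ∈ maxl 𝓛, (S.card : ℝ) - (maxl 𝓛).card) / 2 := by
      rw [← Finset.sum_div, Finset.sum_sub_distrib, Finset.sum_const, nsmul_eq_mul, mul_one]
    have : (𝓛.card : ℝ) ≤ ∑ S ∈ maxl 𝓛, ((S.card : ℝ) - 1) / 2 := by
      rw [h7]; linarith
    linarith [h5 ▸ this, h2, h4]
  have hE : (G.edgeFinset.card : ℝ) = F.card + 𝓛.card + Q.card := by exact_mod_cast hcount
  linarith
end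

section
/- Let G = (V, E) be a finite simple bipartite graph with nonempty edge set, edge colors, and integer color bounds w_j ≥ 1, and let x : E → (0, 1] satisfy Σ_{e∈δ(v)} x_e ≤ 1 for all v ∈ V and Σ_{e∈E_j} x_e ≤ w_j for all colors j. Suppose there exist a set F ⊆ V with Σ_{e∈δ(v)} x_e = 1 for all v ∈ F and a set Q of colors with Σ_{e∈E_j} x_e = w_j for all j ∈ Q, such that |E| = |F| + |Q| and the characteristic vectors {χ_{δ(v)}}_{v∈F} ∪ {χ_{E_j}}_{j∈Q} are linearly independent in ℝ^E. Then |E| < 3 · Σ_{e∈E} x_e. -/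
set_option maxHeartbeats 1000000


/-- A graph is bipartite if there is a set of vertices such that every edge has exactly
one endpoint inside it. -/
def IsBipartiteGraph {V : Type*} (G : SimpleGraph V) : Prop :=
  ∃ A : Set V, ∀ ⦃u v : V⦄, G.Adj u v → (u ∈ A ↔ v ∉ A)

/-- The characteristic vector of a finite set of edges, viewed in `ℝ^E`. -/
def chiVec {α : Type*} [DecidableEq α] (A : Finset α) : α → ℝ :=
  fun e => if e ∈ A then 1 else 0

/-- Support-size bound for basic feasible solutions on bipartite graphs: if
`x : E → (0,1]` satisfies the degree and color constraints, `F` is a set of tight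
vertices and `Q` a set of tight colors with `|E| = |F| + |Q|` and the corresponding
characteristic vectors linearly independent, then `|E| < 3 · ∑_{e ∈ E} x_e`. -/
theorem support_card_lt_three_opt_bipartite {V : Type*} [Fintype V] [DecidableEq V]
    (G : SimpleGraph V) [DecidableRel G.Adj]
    (hbip : IsBipartiteGraph G) (hne : G.edgeFinset.Nonempty)
    (k : ℕ) (c : Sym2 V → Fin k) (w : Fin k → ℕ) (hw : ∀ j, 1 ≤ w j)
    (x : Sym2 V → ℝ) (hx : ∀ e ∈ G.edgeFinset, 0 < x e ∧ x e ≤ 1)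
    (hdeg : ∀ v : V, ∑ e ∈ G.edgeFinset.filter (fun e => v ∈ e), x e ≤ 1)
    (hcol : ∀ j : Fin k, ∑ e ∈ G.edgeFinset.filter (fun e => c e = j), x e ≤ (w j : ℝ))
    (F : Finset V)
    (hF : ∀ v ∈ F, ∑ e ∈ G.edgeFinset.filter (fun e => v ∈ e), x e = 1)
    (Q : Finset (Fin k))
    (hQtight : ∀ j ∈ Q, ∑ e ∈ G.edgeFinset.filter (fun e => c e = j), x e = (w j : ℝ))
    (hcount : G.edgeFinset.card = F.card + Q.card)
    (hindep : LinearIndependent ℝ (Sum.elim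
      (fun v : F => chiVec (G.edgeFinset.filter (fun e => (v : V) ∈ e)))
      (fun j : Q => chiVec (G.edgeFinset.filter (fun e => c e = (j : Fin k)))))) :
    (G.edgeFinset.card : ℝ) < 3 * ∑ e ∈ G.edgeFinset, x e := by
  classical
  obtain ⟨A, hA⟩ := hbip
  set E := G.edgeFinset with hE
  -- per-edge coefficient
  set coef : Sym2 V → ℕ := fun e =>
    (F.filter (fun v => v ∈ e)).card + (if c e ∈ Q then 1 else 0) with hcoef
  have hxpos : ∀ e ∈ E, 0 < x e := fun e he => (hx e he).1
  -- step 1 : |F| as a sum over edges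
  have h1 : (F.card : ℝ) = ∑ e ∈ E, ((F.filter (fun v => v ∈ e)).card : ℝ) * x e := by
    calc (F.card : ℝ) = ∑ v ∈ F, (1 : ℝ) := by simp
    _ = ∑ v ∈ F, ∑ e ∈ E.filter (fun e => v ∈ e), x e :=
        Finset.sum_congr rfl (fun v hv => (hF v hv).symm)
    _ = ∑ v ∈ F, ∑ e ∈ E, if v ∈ e then x e else 0 :=
        Finset.sum_congr rfl (fun v _ => Finset.sum_filter _ _)
    _ = ∑ e ∈ E, ∑ v ∈ F, if v ∈ e then x e else 0 := Finset.sum_comm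
    _ = ∑ e ∈ E, ((F.filter (fun v => v ∈ e)).card : ℝ) * x e := by
        refine Finset.sum_congr rfl (fun e _ => ?_)
        rw [← Finset.sum_filter, Finset.sum_const, nsmul_eq_mul]
  -- step 2 : Σ_{j∈Q} w_j as a sum over edges
  have h2 : ∑ j ∈ Q, (w j : ℝ) = ∑ e ∈ E, (if c e ∈ Q then (1 : ℝ) else 0) * x e := by
    calc ∑ j ∈ Q, (w j : ℝ) = ∑ j ∈ Q, ∑ e ∈ E.filter (fun e => c e = j), x e :=
        Finset.sum_congr rfl (fun j hj => (hQtight j hj).symm)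
    _ = ∑ j ∈ Q, ∑ e ∈ E, if c e = j then x e else 0 :=
        Finset.sum_congr rfl (fun j _ => Finset.sum_filter _ _)
    _ = ∑ e ∈ E, ∑ j ∈ Q, if c e = j then x e else 0 := Finset.sum_comm
    _ = ∑ e ∈ E, (if c e ∈ Q then (1 : ℝ) else 0) * x e := by
        refine Finset.sum_congr rfl (fun e _ => ?_)
        rw [Finset.sum_ite_eq Q (c e) (fun _ => x e)]
        split <;> simp
  -- each edge has at most 2 endpoints in F
  have hcard2 : ∀ e ∈ E, (F.filter (fun v => v ∈ e)).card ≤ 2 := by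
    intro e he
    rw [hE, SimpleGraph.mem_edgeFinset] at he
    induction e using Sym2.ind with
    | _ u v =>
      have hsub : F.filter (fun z => z ∈ s(u, v)) ⊆ {u, v} := by
        intro z hz
        simp only [Finset.mem_filter, Sym2.mem_iff] at hz
        simp [hz.2]
      calc (F.filter (fun z => z ∈ s(u, v))).card ≤ ({u, v} : Finset V).card :=
            Finset.card_le_card hsub
        _ ≤ 2 := le_trans (Finset.card_insert_le _ _) (by simp)
  -- key claim: some edge has coefficient < 3
  have claim : ∃ e ∈ E, coef e < 3 := by
    by_contra hcon
    push_neg at hcon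
    have hall : ∀ e ∈ E, (F.filter (fun v => v ∈ e)).card = 2 ∧ c e ∈ Q := by
      intro e he
      have h3 := hcon e he
      have h2' := hcard2 e he
      rw [hcoef] at h3
      simp only at h3
      constructor
      · by_contra hne2
        have : (F.filter (fun v => v ∈ e)).card + (if c e ∈ Q then 1 else 0) ≤ 2 := by
          have : (F.filter (fun v => v ∈ e)).card ≤ 1 := by omega
          split <;> omega
        omega
      · by_contra hq
        simp only [hq, if_false] at h3
        omega
    -- each edge has both endpoints in F
    have hboth : ∀ u v : V, G.Adj u v → u ∈ F ∧ v ∈ F := by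
      intro u v huv
      have he : s(u, v) ∈ E := by rw [hE, SimpleGraph.mem_edgeFinset]; exact huv
      have hcard := (hall _ he).1
      have hsub : F.filter (fun z => z ∈ s(u, v)) ⊆ {u, v} := by
        intro z hz
        simp only [Finset.mem_filter, Sym2.mem_iff] at hz
        simp [hz.2]
      have hcpair : ({u, v} : Finset V).card = 2 := by
        rw [Finset.card_insert_of_notMem (by simp [G.ne_of_adj huv]), Finset.card_singleton]
      have heq : F.filter (fun z => z ∈ s(u, v)) = {u, v} :=
        Finset.eq_of_subset_of_card_le hsub (by omega)
      constructor
      · have : u ∈ F.filter (fun z => z ∈ s(u, v)) := heq ▸ (by simp)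
        exact (Finset.mem_filter.mp this).1
      · have : v ∈ F.filter (fun z => z ∈ s(u, v)) := heq ▸ (by simp)
        exact (Finset.mem_filter.mp this).1
    -- the linear dependence
    rw [Fintype.linearIndependent_iff] at hindep
    set g : ↥F ⊕ ↥Q → ℝ := Sum.elim (fun v => if (v : V) ∈ A then (1 : ℝ) else -1)
      (fun _ => 0) with hg
    have hsum : ∑ i, g i • (Sum.elim
        (fun v : F => chiVec (G.edgeFinset.filter (fun e => (v : V) ∈ e)))
        (fun j : Q => chiVec (G.edgeFinset.filter (fun e => c e = (j : Fin k))))) i = 0 := by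
      funext f
      rw [Finset.sum_apply]
      rw [Fintype.sum_sum_type]
      have hr : ∑ j : ↥Q, (g (Sum.inr j) • (Sum.elim
          (fun v : F => chiVec (G.edgeFinset.filter (fun e => (v : V) ∈ e)))
          (fun j : Q => chiVec (G.edgeFinset.filter (fun e => c e = (j : Fin k))))) (Sum.inr j)) f
          = 0 := by
        simp [hg]
      rw [hr, add_zero]
      simp only [Sum.elim_inl, hg, Pi.smul_apply, smul_eq_mul, chiVec]
      by_cases hf : f ∈ E
      · -- f is an edge s(u,v) with u,v ∈ F and u ∈ A ↔ v ∉ A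
        have hf' : f ∈ G.edgeSet := by rw [hE, SimpleGraph.mem_edgeFinset] at hf; exact hf
        revert hf hf'
        refine Sym2.ind (fun u v => ?_) f
        intro hf hf'
        have hadj : G.Adj u v := hf'
        have huv : u ≠ v := G.ne_of_adj hadj
        have huF := (hboth u v hadj).1
        have hvF := (hboth u v hadj).2
        have hAuv : u ∈ A ↔ v ∉ A := hA hadj
        have : ∑ z : ↥F, (if (z : V) ∈ A then (1 : ℝ) else -1) *
            (if s(u, v) ∈ G.edgeFinset.filter (fun e => (z : V) ∈ e) then (1 : ℝ) else 0)
            = ∑ z ∈ F, (if z ∈ A then (1 : ℝ) else -1) *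
            (if s(u, v) ∈ G.edgeFinset.filter (fun e => z ∈ e) then (1 : ℝ) else 0) :=
          Finset.sum_coe_sort F (fun z => (if z ∈ A then (1 : ℝ) else -1) *
            (if s(u, v) ∈ G.edgeFinset.filter (fun e => z ∈ e) then (1 : ℝ) else 0))
        rw [this]
        have hterm : ∀ z ∈ F, (if z ∈ A then (1 : ℝ) else -1) *
            (if s(u, v) ∈ G.edgeFinset.filter (fun e => z ∈ e) then (1 : ℝ) else 0)
            = if z ∈ ({u, v} : Finset V) then (if z ∈ A then (1 : ℝ) else -1) else 0 := by
          intro z _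
          by_cases hz : z = u ∨ z = v
          · have hzuv : z ∈ ({u, v} : Finset V) := by simp [hz]
            have hmem : s(u, v) ∈ G.edgeFinset.filter (fun e => z ∈ e) := by
              simp only [Finset.mem_filter, Sym2.mem_iff]
              exact ⟨hf, hz⟩
            simp [hzuv, hmem]
          · push_neg at hz
            have hzuv : z ∉ ({u, v} : Finset V) := by simp [hz.1, hz.2]
            have hmem : s(u, v) ∉ G.edgeFinset.filter (fun e => z ∈ e) := by
              simp only [Finset.mem_filter, Sym2.mem_iff]
              intro h
              rcases h.2 with h | h <;> [exact hz.1 h; exact hz.2 h]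
            simp [hzuv, hmem]
        rw [Finset.sum_congr rfl hterm, ← Finset.sum_filter]
        have hfil : F.filter (fun z => z ∈ ({u, v} : Finset V)) = {u, v} := by
          ext z
          simp only [Finset.mem_filter, Finset.mem_insert, Finset.mem_singleton]
          constructor
          · exact fun h => h.2
          · rintro (rfl | rfl) <;> simp [huF, hvF]
        rw [hfil, Finset.sum_pair huv]
        by_cases hu : u ∈ A
        · have hv : v ∉ A := hAuv.mp hu
          simp [hu, hv]
        · have hv : v ∈ A := by by_contra hv; exact hu (hAuv.mpr hv)
          simp [hu, hv]
      · -- f is not an edge: every term vanishes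
        apply Finset.sum_eq_zero
        intro z _
        have : f ∉ G.edgeFinset.filter (fun e => (z : V) ∈ e) := by
          simp only [Finset.mem_filter]
          exact fun h => hf h.1
        simp [this]
    have hzero := hindep g hsum
    -- F is nonempty
    obtain ⟨e0, he0⟩ := hne
    have hcard0 := (hall e0 he0).1
    have : (F.filter (fun v => v ∈ e0)).Nonempty := by
      rw [← Finset.card_pos]; omega
    obtain ⟨v0, hv0⟩ := this
    have hv0F : v0 ∈ F := (Finset.mem_filter.mp hv0).1
    have := hzero (Sum.inl ⟨v0, hv0F⟩)
    rw [hg] at this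
    simp only [Sum.elim_inl] at this
    split at this <;> norm_num at this
  -- final assembly
  obtain ⟨e0, he0, hcoef0⟩ := claim
  have main : (E.card : ℝ) ≤ ∑ e ∈ E, (coef e : ℝ) * x e := by
    have hQle : (Q.card : ℝ) ≤ ∑ j ∈ Q, (w j : ℝ) := by
      rw [Finset.card_eq_sum_ones, Nat.cast_sum]
      refine Finset.sum_le_sum (fun j _ => ?_)
      exact_mod_cast hw j
    calc (E.card : ℝ) = (F.card : ℝ) + (Q.card : ℝ) := by rw [hcount]; push_cast; ring
    _ ≤ (F.card : ℝ) + ∑ j ∈ Q, (w j : ℝ) := by linarith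
    _ = ∑ e ∈ E, (((F.filter (fun v => v ∈ e)).card : ℝ) * x e
          + (if c e ∈ Q then (1 : ℝ) else 0) * x e) := by
        rw [h1, h2, Finset.sum_add_distrib]
    _ = ∑ e ∈ E, (coef e : ℝ) * x e := by
        refine Finset.sum_congr rfl (fun e _ => ?_)
        rw [hcoef]
        push_cast
        split <;> push_cast <;> ring
  have strict : ∑ e ∈ E, (coef e : ℝ) * x e < ∑ e ∈ E, 3 * x e := by
    apply Finset.sum_lt_sum
    · intro e he
      have hc3 : coef e ≤ 3 := by
        have := hcard2 e he
        rw [hcoef]; simp only; split <;> omega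
      have : (coef e : ℝ) ≤ 3 := by exact_mod_cast hc3
      exact mul_le_mul_of_nonneg_right this (le_of_lt (hxpos e he))
    · refine ⟨e0, he0, ?_⟩
      have : (coef e0 : ℝ) < 3 := by exact_mod_cast hcoef0
      exact mul_lt_mul_of_pos_right this (hxpos e0 he0)
  calc (E.card : ℝ) ≤ ∑ e ∈ E, (coef e : ℝ) * x e := main
  _ < ∑ e ∈ E, 3 * x e := strict
  _ = 3 * ∑ e ∈ E, x e := by rw [Finset.mul_sum]
end

section
/- Let G = (V, E) be a finite simple bipartite graph with edge colors and all color bounds w_j = 1, and let α ≥ 3 be an integer. Let x : E → [0, 1] satisfy Σ_{e∈δ(v)} x_e ≤ 1 for all v ∈ V and Σ_{e∈E_j} x_e ≤ 1 for all colors j. Then there exists a matching M ⊆ E such that |M ∩ E_j| ≤ α for every color j and |M| ≥ (1 − 3/α) · Σ_{e∈E} x_e. -/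
set_option linter.unusedSectionVars false
set_option maxHeartbeats 1000000

open Finset

namespace OBCM

variable {V : Type*} [Fintype V] [DecidableEq V]

open scoped Classical in
noncomputable def vsum (A : Finset (Sym2 V)) (y : Sym2 V → ℝ) (v : V) : ℝ :=
  ∑ e ∈ A.filter (fun e => v ∈ e), y e

open scoped Classical in
noncomputable def csum {k : ℕ} (c : Sym2 V → Fin k) (A : Finset (Sym2 V))
    (y : Sym2 V → ℝ) (j : Fin k) : ℝ :=
  ∑ e ∈ A.filter (fun e => c e = j), y e

noncomputable def tot (A : Finset (Sym2 V)) (y : Sym2 V → ℝ) : ℝ := ∑ e ∈ A, y e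

open scoped Classical

lemma mem_card_two {e : Sym2 V} (he : ¬ e.IsDiag) :
    (univ.filter (fun v => v ∈ e)).card = 2 := by
  induction e using Sym2.ind with
  | _ a b =>
    have hab : a ≠ b := by simpa using he
    have : univ.filter (fun v => v ∈ s(a, b)) = {a, b} := by
      ext v; simp [Sym2.mem_iff]
    rw [this, card_insert_of_notMem (by simpa using hab), card_singleton]

/-- swap lemma: weighted vertex sums over a vertex set. -/
lemma sum_vsum_eq (A : Finset (Sym2 V)) (y : Sym2 V → ℝ) (W : Finset V) :
    ∑ v ∈ W, vsum A y v = ∑ e ∈ A, ((W.filter (fun v => v ∈ e)).card : ℝ) * y e := by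
  unfold vsum
  calc ∑ v ∈ W, ∑ e ∈ A.filter (fun e => v ∈ e), y e
      = ∑ v ∈ W, ∑ e ∈ A, if v ∈ e then y e else 0 := by
        refine Finset.sum_congr rfl fun v _ => ?_
        rw [Finset.sum_filter]
    _ = ∑ e ∈ A, ∑ v ∈ W, if v ∈ e then y e else 0 := Finset.sum_comm
    _ = ∑ e ∈ A, ((W.filter (fun v => v ∈ e)).card : ℝ) * y e := by
        refine Finset.sum_congr rfl fun e _ => ?_
        rw [← Finset.sum_filter, Finset.sum_const, nsmul_eq_mul]

lemma sum_vsum_univ (A : Finset (Sym2 V)) (y : Sym2 V → ℝ)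
    (hA : ∀ e ∈ A, ¬ e.IsDiag) :
    ∑ v, vsum A y v = 2 * tot A y := by
  rw [sum_vsum_eq]
  unfold tot
  rw [Finset.mul_sum]
  refine Finset.sum_congr rfl fun e he => ?_
  rw [mem_card_two (hA e he)]
  norm_num

/-- Covering bound: if every edge of `B ⊆ A` has an endpoint in `W`,
then the total weight of `B` is at most `|W|`. -/
lemma tot_le_card_cover (A B : Finset (Sym2 V)) (y : Sym2 V → ℝ) (W : Finset V)
    (hBA : B ⊆ A) (hy0 : ∀ e ∈ A, 0 ≤ y e) (hdeg : ∀ v, vsum A y v ≤ 1)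
    (hcov : ∀ e ∈ B, ∃ v ∈ W, v ∈ e) : tot B y ≤ (W.card : ℝ) := by
  have h1 : tot B y ≤ ∑ e ∈ A, ((W.filter (fun v => v ∈ e)).card : ℝ) * y e := by
    unfold tot
    calc ∑ e ∈ B, y e ≤ ∑ e ∈ B, ((W.filter (fun v => v ∈ e)).card : ℝ) * y e := by
          refine Finset.sum_le_sum fun e he => ?_
          have h2 : 1 ≤ ((W.filter (fun v => v ∈ e)).card : ℝ) := by
            have : (W.filter (fun v => v ∈ e)).Nonempty := by
              obtain ⟨v, hv, hve⟩ := hcov e he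
              exact ⟨v, by simp [hv, hve]⟩
            have := Finset.card_pos.2 this
            exact_mod_cast this
          nlinarith [hy0 e (hBA he)]
      _ ≤ ∑ e ∈ A, ((W.filter (fun v => v ∈ e)).card : ℝ) * y e := by
          refine Finset.sum_le_sum_of_subset_of_nonneg hBA fun e he _ => ?_
          exact mul_nonneg (by positivity) (hy0 e he)
  rw [← sum_vsum_eq] at h1
  calc tot B y ≤ ∑ v ∈ W, vsum A y v := h1
    _ ≤ ∑ _v ∈ W, (1:ℝ) := Finset.sum_le_sum fun v _ => hdeg v
    _ = W.card := by simp


/-- König / defect Hall: in a bipartite edge set, there is a matching of size at least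
the value of any fractional matching. -/
lemma konig (PF : Finset V) (A : Finset (Sym2 V)) (y : Sym2 V → ℝ)
    (HA : ∀ e ∈ A, ∃ a b, e = s(a, b) ∧ a ∈ PF ∧ b ∉ PF)
    (hy0 : ∀ e ∈ A, 0 ≤ y e)
    (hdeg : ∀ v, vsum A y v ≤ 1) :
    ∃ M, M ⊆ A ∧ IsMatchingSet M ∧ tot A y ≤ (M.card : ℝ) := by
  classical
  set n : ℕ := ⌈tot A y⌉₊ with hn
  have htotPF : tot A y ≤ (PF.card : ℝ) := by
    refine tot_le_card_cover A A y PF (le_refl _) hy0 hdeg fun e he => ?_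
    obtain ⟨a, b, rfl, ha, hb⟩ := HA e he
    exact ⟨a, ha, by simp⟩
  have hnPF : n ≤ PF.card := Nat.ceil_le.2 htotPF
  set d : ℕ := PF.card - n with hd
  set N : V → Finset V := fun a => univ.filter (fun b => b ∉ PF ∧ s(a, b) ∈ A) with hN
  set t : {x // x ∈ PF} → Finset (V ⊕ Fin d) :=
    fun a => ((N ↑a).image Sum.inl) ∪ ((univ : Finset (Fin d)).image Sum.inr) with ht
  have hall : ∀ s : Finset {x // x ∈ PF}, s.card ≤ (s.biUnion t).card := by
    intro s
    rcases s.eq_empty_or_nonempty with rfl | hs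
    · simp
    have hsub : ((s.biUnion fun a => (N ↑a).image Sum.inl) ∪
        ((univ : Finset (Fin d)).image Sum.inr)) ⊆ s.biUnion t := by
      intro x hx
      rcases Finset.mem_union.1 hx with hx | hx
      · obtain ⟨a, ha, hxa⟩ := Finset.mem_biUnion.1 hx
        exact Finset.mem_biUnion.2 ⟨a, ha, Finset.mem_union.2 (Or.inl hxa)⟩
      · obtain ⟨a, ha⟩ := hs
        exact Finset.mem_biUnion.2 ⟨a, ha, Finset.mem_union.2 (Or.inr hx)⟩
    have hbiim : s.biUnion (fun a => (N ↑a).image Sum.inl)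
        = ((s.biUnion fun a => N ↑a).image (Sum.inl : V → V ⊕ Fin d)) := by
      ext x; simp [Finset.mem_biUnion]; tauto
    set NN : Finset V := s.biUnion fun a => N ↑a with hNN
    have hcard1 : (s.biUnion t).card ≥ NN.card + d := by
      refine le_trans ?_ (Finset.card_le_card hsub)
      rw [hbiim, Finset.card_union_of_disjoint]
      · rw [Finset.card_image_of_injective _ Sum.inl_injective,
          Finset.card_image_of_injective _ Sum.inr_injective, Finset.card_univ,
          Fintype.card_fin]
      · simp [Finset.disjoint_left]
    -- the crucial counting estimate
    set simage : Finset V := s.image Subtype.val with hsimage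
    have hsim : simage ⊆ PF := by
      intro v hv; obtain ⟨a, _, rfl⟩ := Finset.mem_image.1 hv; exact a.2
    have hsimcard : simage.card = s.card :=
      Finset.card_image_of_injective _ Subtype.val_injective
    have hcover : tot A y ≤ ((PF \ simage).card : ℝ) + (NN.card : ℝ) := by
      have := tot_le_card_cover A A y ((PF \ simage) ∪ NN) (le_refl _) hy0 hdeg ?_
      · refine this.trans ?_
        have := Finset.card_union_le (PF \ simage) NN
        push_cast
        exact_mod_cast Nat.cast_le.2 this
      · intro e he
        obtain ⟨a, b, rfl, ha, hb⟩ := HA e he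
        by_cases has : a ∈ simage
        · obtain ⟨a', ha's, ha'⟩ := Finset.mem_image.1 has
          refine ⟨b, Finset.mem_union.2 (Or.inr ?_), by simp⟩
          refine Finset.mem_biUnion.2 ⟨a', ha's, ?_⟩
          simp only [hN, Finset.mem_filter, Finset.mem_univ, true_and]
          exact ⟨hb, by rw [ha']; exact he⟩
        · exact ⟨a, Finset.mem_union.2 (Or.inl (Finset.mem_sdiff.2 ⟨ha, has⟩)), by simp⟩
    have hkey : n ≤ (PF.card - s.card) + NN.card := by
      have h1 : ((PF \ simage).card : ℝ) = (PF.card : ℝ) - s.card := by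
        rw [Finset.card_sdiff_of_subset hsim, hsimcard]
        have : s.card ≤ PF.card := hsimcard ▸ Finset.card_le_card hsim
        push_cast [this]; ring
      have h2 : tot A y ≤ ((PF.card - s.card + NN.card : ℕ) : ℝ) := by
        have hsc : s.card ≤ PF.card := hsimcard ▸ Finset.card_le_card hsim
        push_cast [Nat.cast_sub hsc]
        linarith [hcover, h1]
      exact Nat.ceil_le.2 h2
    have hscPF : s.card ≤ PF.card := hsimcard ▸ Finset.card_le_card hsim
    omega
  obtain ⟨f, hfinj, hft⟩ := (Finset.all_card_le_biUnion_card_iff_exists_injective t).1 hall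
  -- extract the matching
  set good : Finset {x // x ∈ PF} := univ.filter (fun a => (f a).isLeft) with hgood
  have hbval : ∀ a ∈ good, ∃ b, f a = Sum.inl b ∧ b ∈ N ↑a := by
    intro a ha
    have hL := (Finset.mem_filter.1 ha).2
    obtain ⟨b, hb⟩ := Sum.isLeft_iff.1 hL
    refine ⟨b, hb, ?_⟩
    have := hft a
    rw [hb] at this
    rcases Finset.mem_union.1 this with h | h
    · obtain ⟨b', hb', hbe⟩ := Finset.mem_image.1 h
      rwa [← Sum.inl_injective hbe]
    · obtain ⟨r, _, hre⟩ := Finset.mem_image.1 h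
      exact absurd hre (by simp)
  set ext : {x // x ∈ PF} → V := fun a => (f a).elim id (fun _ => (a : V)) with hext
  have hextb : ∀ a ∈ good, (ext a ∈ N ↑a) ∧ f a = Sum.inl (ext a) := by
    intro a ha
    obtain ⟨b, hb1, hb2⟩ := hbval a ha
    constructor
    · simp [hext, hb1]; exact hb2
    · simp [hext, hb1]
  set M : Finset (Sym2 V) := good.image (fun (a : {x // x ∈ PF}) => s((a : V), ext a)) with hM
  have hNmem : ∀ a (b : V), b ∈ N a → b ∉ PF ∧ s(a, b) ∈ A := by
    intro a b hb
    have := Finset.mem_filter.1 hb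
    exact this.2
  refine ⟨M, ?_, ?_, ?_⟩
  · intro e he
    obtain ⟨a, ha, rfl⟩ := Finset.mem_image.1 he
    exact (hNmem _ _ (hextb a ha).1).2
  · intro e he g hg hne v hve
    obtain ⟨a1, ha1, rfl⟩ := Finset.mem_image.1 he
    obtain ⟨a2, ha2, rfl⟩ := Finset.mem_image.1 hg
    have hb1 := hNmem _ _ (hextb a1 ha1).1
    have hb2 := hNmem _ _ (hextb a2 ha2).1
    have ha1ne : a1 ≠ a2 := by
      rintro rfl; exact hne rfl
    have hfane : f a1 ≠ f a2 := fun h => ha1ne (hfinj h)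
    have hbne : ext a1 ≠ ext a2 := by
      intro h
      apply hfane
      rw [(hextb a1 ha1).2, (hextb a2 ha2).2, h]
    have hane : (a1 : V) ≠ (a2 : V) := Subtype.val_injective.ne ha1ne
    intro hvf
    rcases Sym2.mem_iff.1 hve with rfl | rfl <;> rcases Sym2.mem_iff.1 hvf with h | h
    · exact hane h
    · exact hb2.1 (h ▸ a1.2)
    · exact hb1.1 (h.symm ▸ a2.2)
    · exact hbne h
  · -- cardinality
    have hMcard : M.card = good.card := by
      rw [hM]
      refine Finset.card_image_of_injOn ?_
      intro a1 ha1 a2 ha2 hedge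
      have hb1 := hNmem _ _ (hextb a1 ha1).1
      have hb2 := hNmem _ _ (hextb a2 ha2).1
      simp only at hedge
      have : (a1 : V) ∈ s((a2 : V), ext a2) := by
        rw [← hedge]; simp
      rcases Sym2.mem_iff.1 this with h | h
      · exact Subtype.val_injective h
      · exact absurd (h ▸ a1.2) hb2.1
    have hgoodcard : PF.card - d ≤ good.card := by
      have hsplit : good.card + (univ.filter (fun a : {x // x ∈ PF} => ¬ (f a).isLeft)).card
          = PF.card := by
        rw [hgood, Finset.card_filter_add_card_filter_not]
        simp [Finset.card_univ]
      have hbad : (univ.filter (fun a : {x // x ∈ PF} => ¬ (f a).isLeft)).card ≤ d := by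
        set bad := univ.filter (fun a : {x // x ∈ PF} => ¬ (f a).isLeft) with hbaddef
        have : bad.card = (bad.image f).card :=
          (Finset.card_image_of_injOn (hfinj.injOn)).symm
        rw [this]
        have hsub : bad.image f ⊆ (univ : Finset (Fin d)).image Sum.inr := by
          intro x hx
          obtain ⟨a, ha, rfl⟩ := Finset.mem_image.1 hx
          have hnl := (Finset.mem_filter.1 ha).2
          rcases Sum.not_isLeft.1 (by simpa using hnl) |> Sum.isRight_iff.1 with ⟨r, hr⟩
          rw [hr]; exact Finset.mem_image.2 ⟨r, Finset.mem_univ r, rfl⟩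
        calc (bad.image f).card ≤ _ := Finset.card_le_card hsub
          _ = d := by rw [Finset.card_image_of_injective _ Sum.inr_injective,
            Finset.card_univ, Fintype.card_fin]
      omega
    have hnle : n ≤ M.card := by omega
    calc tot A y ≤ (n : ℝ) := Nat.le_ceil _
      _ ≤ (M.card : ℝ) := Nat.cast_le.2 hnle

lemma vsum_add_smul (A : Finset (Sym2 V)) (y w : Sym2 V → ℝ) (ε : ℝ) (v : V) :
    vsum A (fun e => y e + ε * w e) v = vsum A y v + ε * vsum A w v := by
  unfold vsum; rw [Finset.sum_add_distrib, Finset.mul_sum]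

lemma csum_add_smul {k : ℕ} (c : Sym2 V → Fin k) (A : Finset (Sym2 V))
    (y w : Sym2 V → ℝ) (ε : ℝ) (j : Fin k) :
    csum c A (fun e => y e + ε * w e) j = csum c A y j + ε * csum c A w j := by
  unfold csum; rw [Finset.sum_add_distrib, Finset.mul_sum]

lemma tot_add_smul (A : Finset (Sym2 V)) (y w : Sym2 V → ℝ) (ε : ℝ) :
    tot A (fun e => y e + ε * w e) = tot A y + ε * tot A w := by
  unfold tot; rw [Finset.sum_add_distrib, Finset.mul_sum]

lemma vsum_nonneg_mem (A : Finset (Sym2 V)) (y : Sym2 V → ℝ)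
    (hy : ∀ e ∈ A, 0 ≤ y e) (v : V) : 0 ≤ vsum A y v :=
  Finset.sum_nonneg fun e he => hy e (Finset.mem_filter.1 he).1

lemma single_le_vsum (A : Finset (Sym2 V)) (y : Sym2 V → ℝ)
    (hy : ∀ e ∈ A, 0 ≤ y e) {e : Sym2 V} {v : V} (he : e ∈ A) (hv : v ∈ e) :
    y e ≤ vsum A y v := by
  refine Finset.single_le_sum (fun f hf => hy f (Finset.mem_filter.1 hf).1) ?_
  exact Finset.mem_filter.2 ⟨he, hv⟩

/-- The pivot step: given a strictly fractional point that is not "extreme"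
(more support edges than tight constraints), we can move to a feasible point with
no smaller total value, preserving tight constraints, and either creating a zero
edge or a new tight constraint. -/
lemma pivot_step {k : ℕ} (c : Sym2 V → Fin k) (A : Finset (Sym2 V)) (y : Sym2 V → ℝ)
    (act : Finset (Fin k))
    (hfrac : ∀ e ∈ A, 0 < y e ∧ y e < 1)
    (hdeg : ∀ v, vsum A y v ≤ 1)
    (hcol : ∀ j ∈ act, csum c A y j ≤ 1)
    (hcard : (univ.filter (fun v => vsum A y v = 1)).card
        + (act.filter (fun j => csum c A y j = 1)).card < A.card) :
    ∃ y' : Sym2 V → ℝ,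
      (∀ e ∈ A, 0 ≤ y' e ∧ y' e ≤ 1) ∧
      (∀ v, vsum A y' v ≤ 1) ∧
      (∀ j ∈ act, csum c A y' j ≤ 1) ∧
      tot A y ≤ tot A y' ∧
      (∀ v, vsum A y v = 1 → vsum A y' v = 1) ∧
      (∀ j ∈ act, csum c A y j = 1 → csum c A y' j = 1) ∧
      ((∃ e ∈ A, y' e = 0) ∨
        (univ.filter (fun v => vsum A y v = 1)).card
          + (act.filter (fun j => csum c A y j = 1)).card <
        (univ.filter (fun v => vsum A y' v = 1)).card
          + (act.filter (fun j => csum c A y' j = 1)).card) := by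
  classical
  set D : Finset V := univ.filter (fun v => vsum A y v = 1) with hD
  set T : Finset (Fin k) := act.filter (fun j => csum c A y j = 1) with hT
  -- kernel direction
  obtain ⟨w, hwoff, hwv, hwc, hwne⟩ :
      ∃ w : Sym2 V → ℝ, (∀ e, e ∉ A → w e = 0) ∧
        (∀ v ∈ D, vsum A w v = 0) ∧ (∀ j ∈ T, csum c A w j = 0) ∧
        (∃ e ∈ A, w e ≠ 0) := by
    set L : ({e // e ∈ A} → ℝ) →ₗ[ℝ] (({v // v ∈ D} ⊕ {j // j ∈ T}) → ℝ) :=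
      LinearMap.pi (fun i => Sum.elim
        (fun (v : {v // v ∈ D}) =>
          ∑ e ∈ A.attach.filter (fun (e : {e // e ∈ A}) => v.1 ∈ e.1),
          (LinearMap.proj (R := ℝ) (φ := fun _ : {e // e ∈ A} => ℝ) e))
        (fun (j : {j // j ∈ T}) =>
          ∑ e ∈ A.attach.filter (fun (e : {e // e ∈ A}) => c e.1 = j.1),
          (LinearMap.proj (R := ℝ) (φ := fun _ : {e // e ∈ A} => ℝ) e)) i) with hL
    have hni : ¬ Function.Injective L := by
      intro hinj
      have h1 := LinearMap.finrank_le_finrank_of_injective hinj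
      rw [Module.finrank_fintype_fun_eq_card, Module.finrank_fintype_fun_eq_card,
        Fintype.card_sum, Fintype.card_coe, Fintype.card_coe, Fintype.card_coe] at h1
      omega
    have hker : LinearMap.ker L ≠ ⊥ := fun h => hni (LinearMap.ker_eq_bot.1 h)
    obtain ⟨z0, hz0mem, hz0ne⟩ := Submodule.exists_mem_ne_zero_of_ne_bot hker
    have hz0 : L z0 = 0 := LinearMap.mem_ker.1 hz0mem
    set w : Sym2 V → ℝ := fun e => if h : e ∈ A then z0 ⟨e, h⟩ else 0 with hw
    have htrans : ∀ (p : Sym2 V → Prop) (hp : DecidablePred p),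
        ∑ e ∈ A.filter p, w e = ∑ e ∈ A.attach.filter (fun (e : {e // e ∈ A}) => p e.1), z0 e := by
      intro p hp
      rw [Finset.sum_filter, ← Finset.sum_attach A (fun e => if p e then w e else 0),
        Finset.sum_filter]
      refine Finset.sum_congr rfl fun e _ => ?_
      by_cases hpe : p ↑e
      · simp only [hpe, if_true, hw, dif_pos e.2]
      · simp [hpe]
    refine ⟨w, fun e he => by simp [hw, dif_neg he], ?_, ?_, ?_⟩
    · intro v hv
      have := congrFun hz0 (Sum.inl ⟨v, hv⟩)
      simp only [hL, LinearMap.pi_apply, Sum.elim_inl, LinearMap.coe_sum,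
        Finset.sum_apply, LinearMap.proj_apply, Pi.zero_apply] at this
      unfold vsum
      rw [htrans _ _]
      exact this
    · intro j hj
      have := congrFun hz0 (Sum.inr ⟨j, hj⟩)
      simp only [hL, LinearMap.pi_apply, Sum.elim_inr, LinearMap.coe_sum,
        Finset.sum_apply, LinearMap.proj_apply, Pi.zero_apply] at this
      unfold csum
      rw [htrans _ _]
      exact this
    · have : ∃ e0 : {e // e ∈ A}, z0 e0 ≠ 0 := by
        by_contra h
        push_neg at h
        exact hz0ne (funext fun e => h e)
      obtain ⟨e0, he0⟩ := this
      exact ⟨↑e0, e0.2, by simp only [hw, dif_pos e0.2]; exact he0⟩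
  -- choose a sign with nonnegative total movement
  obtain ⟨w, hwoff, hwv, hwc, hwne, hwtot⟩ :
      ∃ w : Sym2 V → ℝ, (∀ e, e ∉ A → w e = 0) ∧
        (∀ v ∈ D, vsum A w v = 0) ∧ (∀ j ∈ T, csum c A w j = 0) ∧
        (∃ e ∈ A, w e ≠ 0) ∧ 0 ≤ tot A w := by
    rcases le_or_gt 0 (tot A w) with h | h
    · exact ⟨w, hwoff, hwv, hwc, hwne, h⟩
    · refine ⟨fun e => - w e, fun e he => by simp [hwoff e he], ?_, ?_, ?_, ?_⟩
      · intro v hv; have h2 := hwv v hv; unfold vsum at *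
        rw [Finset.sum_neg_distrib, h2]; ring
      · intro j hj; have h2 := hwc j hj; unfold csum at *
        rw [Finset.sum_neg_distrib, h2]; ring
      · obtain ⟨e, he, hne⟩ := hwne; exact ⟨e, he, by simpa using hne⟩
      · unfold tot at *; rw [Finset.sum_neg_distrib]; linarith
  -- epsilon
  set S1 : Finset ℝ := (A.filter (fun e => 0 < w e)).image (fun e => (1 - y e) / w e)
    with hS1
  set S2 : Finset ℝ := (A.filter (fun e => w e < 0)).image (fun e => y e / (- w e))
    with hS2
  set S3 : Finset ℝ := (univ.filter (fun v => vsum A y v < 1 ∧ 0 < vsum A w v)).image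
    (fun v => (1 - vsum A y v) / vsum A w v) with hS3
  set S4 : Finset ℝ := (act.filter (fun j => csum c A y j < 1 ∧ 0 < csum c A w j)).image
    (fun j => (1 - csum c A y j) / csum c A w j) with hS4
  set E : Finset ℝ := S1 ∪ S2 ∪ S3 ∪ S4 with hE
  have hEne : E.Nonempty := by
    obtain ⟨e, he, hne⟩ := hwne
    rcases lt_or_gt_of_ne hne with h | h
    · exact ⟨y e / (- w e), by
        simp only [hE]
        refine Finset.mem_union_left _ (Finset.mem_union_left _ (Finset.mem_union_right _ ?_))
        exact Finset.mem_image.2 ⟨e, Finset.mem_filter.2 ⟨he, h⟩, rfl⟩⟩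
    · exact ⟨(1 - y e) / w e, by
        simp only [hE]
        refine Finset.mem_union_left _ (Finset.mem_union_left _ (Finset.mem_union_left _ ?_))
        exact Finset.mem_image.2 ⟨e, Finset.mem_filter.2 ⟨he, h⟩, rfl⟩⟩
  have hEpos : ∀ r ∈ E, 0 < r := by
    intro r hr
    simp only [hE, Finset.mem_union] at hr
    rcases hr with ((hr | hr) | hr) | hr
    · obtain ⟨e, he, rfl⟩ := Finset.mem_image.1 hr
      have h1 := Finset.mem_filter.1 he
      exact div_pos (by linarith [(hfrac e h1.1).2]) h1.2
    · obtain ⟨e, he, rfl⟩ := Finset.mem_image.1 hr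
      have h1 := Finset.mem_filter.1 he
      exact div_pos (hfrac e h1.1).1 (by linarith [h1.2])
    · obtain ⟨v, hv, rfl⟩ := Finset.mem_image.1 hr
      have h1 := Finset.mem_filter.1 hv
      exact div_pos (by linarith [h1.2.1]) h1.2.2
    · obtain ⟨j, hj, rfl⟩ := Finset.mem_image.1 hr
      have h1 := Finset.mem_filter.1 hj
      exact div_pos (by linarith [h1.2.1]) h1.2.2
  set ε : ℝ := E.min' hEne with hε
  have hεpos : 0 < ε := hEpos _ (E.min'_mem hEne)
  have hεle : ∀ r ∈ E, ε ≤ r := fun r hr => Finset.min'_le E r hr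
  set y' : Sym2 V → ℝ := fun e => y e + ε * w e with hy'
  -- feasibility of y'
  have hbounds : ∀ e ∈ A, 0 ≤ y' e ∧ y' e ≤ 1 := by
    intro e he
    constructor
    · rcases le_or_gt 0 (w e) with h | h
      · have := (hfrac e he).1; simp only [hy']; nlinarith
      · have hmem : y e / (- w e) ∈ E := by
          simp only [hE]
          refine Finset.mem_union_left _ (Finset.mem_union_left _ (Finset.mem_union_right _ ?_))
          exact Finset.mem_image.2 ⟨e, Finset.mem_filter.2 ⟨he, h⟩, rfl⟩
        have h2 := hεle _ hmem
        have h3 : ε * (- w e) ≤ y e := (le_div_iff₀ (by linarith)).1 h2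
        simp only [hy']; nlinarith
    · rcases le_or_gt (w e) 0 with h | h
      · have := (hfrac e he).2; simp only [hy']; nlinarith
      · have hmem : (1 - y e) / w e ∈ E := by
          simp only [hE]
          refine Finset.mem_union_left _ (Finset.mem_union_left _ (Finset.mem_union_left _ ?_))
          exact Finset.mem_image.2 ⟨e, Finset.mem_filter.2 ⟨he, h⟩, rfl⟩
        have h2 := hεle _ hmem
        have h3 : ε * w e ≤ 1 - y e := (le_div_iff₀ h).1 h2
        simp only [hy']; linarith
  have hdeg' : ∀ v, vsum A y' v ≤ 1 := by
    intro v
    rw [hy', vsum_add_smul]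
    by_cases hv : v ∈ D
    · rw [hwv v hv, mul_zero, add_zero]
      exact hdeg v
    · have hvlt : vsum A y v < 1 := by
        rcases lt_or_eq_of_le (hdeg v) with h | h
        · exact h
        · exact absurd (Finset.mem_filter.2 ⟨Finset.mem_univ v, h⟩) hv
      rcases le_or_gt (vsum A w v) 0 with h | h
      · nlinarith
      · have hmem : (1 - vsum A y v) / vsum A w v ∈ E := by
          simp only [hE]
          refine Finset.mem_union_left _ (Finset.mem_union_right _ ?_)
          exact Finset.mem_image.2 ⟨v, Finset.mem_filter.2 ⟨Finset.mem_univ v, hvlt, h⟩, rfl⟩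
        have h2 := hεle _ hmem
        have h3 : ε * vsum A w v ≤ 1 - vsum A y v := (le_div_iff₀ h).1 h2
        linarith
  have hcol' : ∀ j ∈ act, csum c A y' j ≤ 1 := by
    intro j hj
    rw [hy', csum_add_smul]
    by_cases hjt : j ∈ T
    · rw [hwc j hjt, mul_zero, add_zero]
      exact hcol j hj
    · have hjlt : csum c A y j < 1 := by
        rcases lt_or_eq_of_le (hcol j hj) with h | h
        · exact h
        · exact absurd (Finset.mem_filter.2 ⟨hj, h⟩) hjt
      rcases le_or_gt (csum c A w j) 0 with h | h
      · nlinarith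
      · have hmem : (1 - csum c A y j) / csum c A w j ∈ E := by
          simp only [hE]
          refine Finset.mem_union_right _ ?_
          exact Finset.mem_image.2 ⟨j, Finset.mem_filter.2 ⟨hj, hjlt, h⟩, rfl⟩
        have h2 := hεle _ hmem
        have h3 : ε * csum c A w j ≤ 1 - csum c A y j := (le_div_iff₀ h).1 h2
        linarith
  have htot' : tot A y ≤ tot A y' := by
    rw [hy', tot_add_smul]; nlinarith
  have hDpres : ∀ v, vsum A y v = 1 → vsum A y' v = 1 := by
    intro v hv
    rw [hy', vsum_add_smul, hwv v (Finset.mem_filter.2 ⟨Finset.mem_univ v, hv⟩), mul_zero,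
      add_zero, hv]
  have hTpres : ∀ j ∈ act, csum c A y j = 1 → csum c A y' j = 1 := by
    intro j hj h1
    rw [hy', csum_add_smul, hwc j (Finset.mem_filter.2 ⟨hj, h1⟩), mul_zero, add_zero, h1]
  refine ⟨y', hbounds, hdeg', hcol', htot', hDpres, hTpres, ?_⟩
  -- progress: a zero edge or a new tight constraint
  have hDsub : D ⊆ univ.filter (fun v => vsum A y' v = 1) := by
    intro v hv
    exact Finset.mem_filter.2 ⟨Finset.mem_univ v, hDpres v (Finset.mem_filter.1 hv).2⟩
  have hTsub : T ⊆ act.filter (fun j => csum c A y' j = 1) := by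
    intro j hj
    have h1 := Finset.mem_filter.1 hj
    exact Finset.mem_filter.2 ⟨h1.1, hTpres j h1.1 h1.2⟩
  have hmin : ε ∈ E := E.min'_mem hEne
  rw [hE] at hmin
  have newtight : ∀ (P : Prop), (∀ v, v ∉ D → vsum A y' v = 1 → P) →
      (∀ j, j ∈ act → j ∉ T → csum c A y' j = 1 → P) →
      ((∃ e ∈ A, y' e = 0) → P) → P := by
    intro P hPv hPj hPz
    rcases Finset.mem_union.1 hmin with hm | hm
    · rcases Finset.mem_union.1 hm with hm | hm
      · rcases Finset.mem_union.1 hm with hm | hm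
        · -- S1 : an edge reaches 1
          obtain ⟨e0, he0, heq⟩ := Finset.mem_image.1 hm
          have h1 := Finset.mem_filter.1 he0
          have hwe0 : w e0 ≠ 0 := ne_of_gt h1.2
          have heps : 1 - y e0 = ε * w e0 := (div_eq_iff hwe0).1 heq
          have hy'1 : y' e0 = 1 := by
            simp only [hy']; linarith
          -- an endpoint of e0
          obtain ⟨u, hu⟩ : ∃ u, u ∈ e0 := ⟨e0.out.1, Sym2.out_fst_mem e0⟩
          have hvs1 : vsum A y' u = 1 := by
            refine le_antisymm (hdeg' u) ?_
            calc (1:ℝ) = y' e0 := hy'1.symm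
              _ ≤ vsum A y' u := single_le_vsum A y' (fun f hf => (hbounds f hf).1) h1.1 hu
          by_cases hz : ∃ f ∈ A, y' f = 0
          · exact hPz hz
          · refine hPv u ?_ hvs1
            intro huD
            -- u was tight: some other edge at u must vanish
            push_neg at hz
            have hvsu : vsum A y u = 1 := (Finset.mem_filter.1 huD).2
            have he0lt : y e0 < 1 := (hfrac e0 h1.1).2
            have hex : ∃ f ∈ A.filter (fun e => u ∈ e), f ≠ e0 := by
              by_contra hno
              push_neg at hno
              have hsub2 : A.filter (fun e => u ∈ e) ⊆ {e0} := fun f hf => by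
                simp [hno f hf]
              have : vsum A y u ≤ y e0 := by
                unfold vsum
                calc ∑ e ∈ A.filter (fun e => u ∈ e), y e
                    ≤ ∑ e ∈ {e0}, y e := by
                      refine Finset.sum_le_sum_of_subset_of_nonneg hsub2 ?_
                      intro f hf _; exact le_of_lt (hfrac f (Finset.mem_singleton.1 hf ▸ h1.1)).1
                  _ = y e0 := by simp
              linarith
            obtain ⟨f, hf, hfne⟩ := hex
            have hvsu' : vsum A y' u = 1 := hDpres u hvsu
            -- sum of y' over edges at u other than e0 is 0
            have hsplit : y' e0 + ∑ e ∈ (A.filter (fun e => u ∈ e)).erase e0, y' e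
                = vsum A y' u := by
              unfold vsum
              rw [Finset.add_sum_erase _ _ (Finset.mem_filter.2 ⟨h1.1, hu⟩)]
            have hrest : ∑ e ∈ (A.filter (fun e => u ∈ e)).erase e0, y' e = 0 := by
              rw [hvsu'] at hsplit; linarith [hy'1, hsplit]
            have hfz : y' f = 0 := by
              have hnn : ∀ e ∈ (A.filter (fun e => u ∈ e)).erase e0, 0 ≤ y' e := by
                intro e he
                exact (hbounds e (Finset.mem_filter.1 (Finset.mem_of_mem_erase he)).1).1
              have := (Finset.sum_eq_zero_iff_of_nonneg hnn).1 hrest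
              exact this f (Finset.mem_erase.2 ⟨hfne, hf⟩)
            exact hz f (Finset.mem_filter.1 hf).1 hfz
        · -- S2 : an edge reaches 0
          obtain ⟨e0, he0, heq⟩ := Finset.mem_image.1 hm
          have h1 := Finset.mem_filter.1 he0
          have hwe0 : - w e0 ≠ 0 := by intro h; exact (ne_of_lt h1.2) (by linarith)
          have heps : y e0 = ε * - w e0 := (div_eq_iff hwe0).1 heq
          refine hPz ⟨e0, h1.1, ?_⟩
          simp only [hy']; linear_combination heps
      · -- S3 : new tight vertex
        obtain ⟨v0, hv0, heq⟩ := Finset.mem_image.1 hm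
        have h1 := Finset.mem_filter.1 hv0
        have hv0nD : v0 ∉ D := by
          intro hvD
          have := (Finset.mem_filter.1 hvD).2
          linarith [h1.2.1]
        have hws : vsum A w v0 ≠ 0 := ne_of_gt h1.2.2
        have heps : 1 - vsum A y v0 = ε * vsum A w v0 := (div_eq_iff hws).1 heq
        refine hPv v0 hv0nD ?_
        rw [hy', vsum_add_smul]; linarith
    · -- S4 : new tight color
      obtain ⟨j0, hj0, heq⟩ := Finset.mem_image.1 hm
      have h1 := Finset.mem_filter.1 hj0
      have hj0nT : j0 ∉ T := by
        intro hjT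
        have := (Finset.mem_filter.1 hjT).2
        linarith [h1.2.1]
      have hws : csum c A w j0 ≠ 0 := ne_of_gt h1.2.2
      have heps : 1 - csum c A y j0 = ε * csum c A w j0 := (div_eq_iff hws).1 heq
      refine hPj j0 h1.1 hj0nT ?_
      rw [hy', csum_add_smul]; linarith
  refine newtight _ ?_ ?_ (fun h => Or.inl h)
  · intro v hvD hv1
    refine Or.inr ?_
    have hDss : D ⊂ univ.filter (fun v => vsum A y' v = 1) :=
      ⟨hDsub, fun hss => hvD (hss (Finset.mem_filter.2 ⟨Finset.mem_univ v, hv1⟩))⟩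
    have h1 := Finset.card_lt_card hDss
    have h2 := Finset.card_le_card hTsub
    omega
  · intro j hja hjT hj1
    refine Or.inr ?_
    have hTss : T ⊂ act.filter (fun j => csum c A y' j = 1) :=
      ⟨hTsub, fun hss => hjT (hss (Finset.mem_filter.2 ⟨hja, hj1⟩))⟩
    have h1 := Finset.card_lt_card hTss
    have h2 := Finset.card_le_card hDsub
    omega

noncomputable def meas {k : ℕ} (c : Sym2 V → Fin k) (A : Finset (Sym2 V))
    (y : Sym2 V → ℝ) (act : Finset (Fin k)) : ℕ :=
  A.card * ((k + 1) * (Fintype.card V + k + 1)) + act.card * (Fintype.card V + k + 1)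
    + ((Fintype.card V + k)
      - ((univ.filter (fun v => vsum A y v = 1)).card
        + (act.filter (fun j => csum c A y j = 1)).card))

lemma meas_lt_of_card_lt {k : ℕ} (c : Sym2 V → Fin k) {A A' : Finset (Sym2 V)}
    (y y' : Sym2 V → ℝ) {act act' : Finset (Fin k)}
    (hA : A'.card < A.card) : meas c A' y' act' < meas c A y act := by
  unfold meas
  set Q := Fintype.card V + k + 1 with hQ
  have hact : act'.card ≤ k := by
    have := Finset.card_le_univ act'
    simpa using this
  have hr : (Fintype.card V + k)
      - ((univ.filter (fun v => vsum A' y' v = 1)).card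
        + (act'.filter (fun j => csum c A' y' j = 1)).card) ≤ Q - 1 := by
    omega
  calc A'.card * ((k + 1) * Q) + act'.card * Q + _
      ≤ A'.card * ((k + 1) * Q) + k * Q + (Q - 1) := by
        refine Nat.add_le_add (Nat.add_le_add_left (Nat.mul_le_mul_right _ hact) _) hr
    _ < A'.card * ((k + 1) * Q) + (k + 1) * Q := by
        have hQ1 : 1 ≤ Q := by omega
        have : k * Q + (Q - 1) < (k + 1) * Q := by
          have : (k + 1) * Q = k * Q + Q := by ring
          omega
        omega
    _ = (A'.card + 1) * ((k + 1) * Q) := by ring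
    _ ≤ A.card * ((k + 1) * Q) := Nat.mul_le_mul_right _ (by omega)
    _ ≤ _ := by omega

lemma meas_lt_of_act_lt {k : ℕ} (c : Sym2 V → Fin k) (A : Finset (Sym2 V))
    (y y' : Sym2 V → ℝ) {act act' : Finset (Fin k)}
    (hact : act'.card < act.card) : meas c A y' act' < meas c A y act := by
  unfold meas
  set Q := Fintype.card V + k + 1 with hQ
  have hr : (Fintype.card V + k)
      - ((univ.filter (fun v => vsum A y' v = 1)).card
        + (act'.filter (fun j => csum c A y' j = 1)).card) ≤ Q - 1 := by
    omega
  have h1 : act'.card * Q + (Q - 1) < act.card * Q := by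
    have h2 : (act'.card + 1) * Q ≤ act.card * Q := Nat.mul_le_mul_right _ (by omega)
    have h3 : (act'.card + 1) * Q = act'.card * Q + Q := by ring
    omega
  omega

lemma meas_lt_of_tight {k : ℕ} (c : Sym2 V → Fin k) (A : Finset (Sym2 V))
    (y y' : Sym2 V → ℝ) (act : Finset (Fin k))
    (ht : (univ.filter (fun v => vsum A y v = 1)).card
        + (act.filter (fun j => csum c A y j = 1)).card <
      (univ.filter (fun v => vsum A y' v = 1)).card
        + (act.filter (fun j => csum c A y' j = 1)).card)
    (hb : (univ.filter (fun v => vsum A y' v = 1)).card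
        + (act.filter (fun j => csum c A y' j = 1)).card ≤ Fintype.card V + k) :
    meas c A y' act < meas c A y act := by
  unfold meas
  omega

lemma tight_bound {k : ℕ} (c : Sym2 V → Fin k) (A : Finset (Sym2 V))
    (y : Sym2 V → ℝ) (act : Finset (Fin k)) :
    (univ.filter (fun v => vsum A y v = 1)).card
      + (act.filter (fun j => csum c A y j = 1)).card ≤ Fintype.card V + k := by
  have h1 : (univ.filter (fun v => vsum A y v = 1)).card ≤ Fintype.card V := by
    simpa using Finset.card_le_univ (univ.filter (fun v => vsum A y v = 1))
  have h2 : (act.filter (fun j => csum c A y j = 1)).card ≤ k := by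
    calc (act.filter (fun j => csum c A y j = 1)).card ≤ act.card :=
          Finset.card_filter_le _ _
      _ ≤ k := by simpa using Finset.card_le_univ act
  omega

lemma rec_main (PF : Finset V) {k : ℕ} (c : Sym2 V → Fin k) (α : ℕ) (hα : 2 ≤ α)
    (n : ℕ) :
    ∀ (A : Finset (Sym2 V)) (y : Sym2 V → ℝ) (act : Finset (Fin k)) (b : Fin k → ℕ),
    meas c A y act ≤ n →
    (∀ e ∈ A, ∃ a b', e = s(a, b') ∧ a ∈ PF ∧ b' ∉ PF) →
    (∀ e ∈ A, 0 < y e ∧ y e ≤ 1) →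
    (∀ v, vsum A y v ≤ 1) →
    (∀ j ∈ act, csum c A y j ≤ 1) →
    (∀ j ∈ act, b j = α) →
    (∀ j, j ∉ act → (A.filter (fun e => c e = j)).card ≤ b j) →
    ∃ M, M ⊆ A ∧ IsMatchingSet M ∧ (∀ j, (M.filter (fun e => c e = j)).card ≤ b j) ∧
      (1 - 2 / (α : ℝ)) * tot A y ≤ (M.card : ℝ) := by
  induction n using Nat.strong_induction_on with
  | _ n IH =>
  intro A y act b hn HA hfrac hdeg hcol hbact hbin
  have hαR : (0:ℝ) < (α:ℝ) := by
    have : (2:ℝ) ≤ (α:ℝ) := by exact_mod_cast hα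
    linarith
  have hfac0 : (0:ℝ) ≤ 1 - 2 / (α:ℝ) := by
    rw [sub_nonneg, div_le_one hαR]
    exact_mod_cast hα
  have hfac1 : 1 - 2 / (α:ℝ) ≤ 1 := by
    have : (0:ℝ) ≤ 2 / (α:ℝ) := by positivity
    linarith
  by_cases h1 : ∃ e ∈ A, y e = 1
  · -- TAKE an integral edge
    obtain ⟨e, heA, hye⟩ := h1
    have hiso : ∀ f ∈ A, f ≠ e → ∀ v, v ∈ e → v ∉ f := by
      intro f hf hne v hv hvf
      have hsub2 : ({e, f} : Finset (Sym2 V)) ⊆ A.filter (fun g => v ∈ g) := by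
        intro g hg
        rcases Finset.mem_insert.1 hg with rfl | hg
        · exact Finset.mem_filter.2 ⟨heA, hv⟩
        · rw [Finset.mem_singleton.1 hg]
          exact Finset.mem_filter.2 ⟨hf, hvf⟩
      have h2 : y e + y f ≤ vsum A y v := by
        unfold vsum
        calc y e + y f = ∑ g ∈ ({e, f} : Finset (Sym2 V)), y g := by
              rw [Finset.sum_pair (Ne.symm hne)]
          _ ≤ _ := by
            refine Finset.sum_le_sum_of_subset_of_nonneg hsub2 ?_
            intro g hg _
            exact (hfrac g (Finset.mem_filter.1 hg).1).1.le
      have := hdeg v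
      have := (hfrac f hf).1
      linarith
    set A' := A.erase e with hA'
    have hA'sub : A' ⊆ A := Finset.erase_subset _ _
    have hvsub : ∀ v, vsum A' y v ≤ vsum A y v := by
      intro v
      unfold vsum
      refine Finset.sum_le_sum_of_subset_of_nonneg
        (Finset.filter_subset_filter _ hA'sub) ?_
      intro g hg _
      exact (hfrac g (Finset.mem_filter.1 hg).1).1.le
    have hcsub : ∀ j, csum c A' y j ≤ csum c A y j := by
      intro j
      unfold csum
      refine Finset.sum_le_sum_of_subset_of_nonneg
        (Finset.filter_subset_filter _ hA'sub) ?_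
      intro g hg _
      exact (hfrac g (Finset.mem_filter.1 hg).1).1.le
    have htoteq : tot A y = tot A' y + 1 := by
      unfold tot
      rw [← Finset.add_sum_erase A y heA, hye]
      ring
    have hmeaslt : ∀ act'' : Finset (Fin k), meas c A' y act'' < n :=
      fun act'' => lt_of_lt_of_le (meas_lt_of_card_lt c y y
        (Finset.card_erase_lt_of_mem heA)) hn
    have HA' : ∀ f ∈ A', ∃ a b', f = s(a, b') ∧ a ∈ PF ∧ b' ∉ PF :=
      fun f hf => HA f (hA'sub hf)
    have hfrac' : ∀ f ∈ A', 0 < y f ∧ y f ≤ 1 := fun f hf => hfrac f (hA'sub hf)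
    have hdeg' : ∀ v, vsum A' y v ≤ 1 := fun v => le_trans (hvsub v) (hdeg v)
    by_cases hce : c e ∈ act
    · -- the color of e was active: it dies with e
      have hcolordead : ∀ f ∈ A, f ≠ e → c f ≠ c e := by
        intro f hf hne hc
        have hsub2 : ({e, f} : Finset (Sym2 V)) ⊆ A.filter (fun g => c g = c e) := by
          intro g hg
          rcases Finset.mem_insert.1 hg with rfl | hg
          · exact Finset.mem_filter.2 ⟨heA, rfl⟩
          · rw [Finset.mem_singleton.1 hg]
            exact Finset.mem_filter.2 ⟨hf, hc⟩
        have h2 : y e + y f ≤ csum c A y (c e) := by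
          unfold csum
          calc y e + y f = ∑ g ∈ ({e, f} : Finset (Sym2 V)), y g := by
                rw [Finset.sum_pair (Ne.symm hne)]
            _ ≤ _ := by
              refine Finset.sum_le_sum_of_subset_of_nonneg hsub2 ?_
              intro g hg _
              exact (hfrac g (Finset.mem_filter.1 hg).1).1.le
        have := hcol (c e) hce
        have := (hfrac f hf).1
        linarith
      have hA'empty : A'.filter (fun f => c f = c e) = ∅ := by
        rw [Finset.filter_eq_empty_iff]
        intro f hf
        exact hcolordead f (hA'sub hf) (Finset.ne_of_mem_erase hf)
      obtain ⟨M', hM'sub, hM'match, hM'caps, hM'card⟩ :=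
        IH (meas c A' y (act.erase (c e))) (hmeaslt _) A' y (act.erase (c e)) b
          (le_refl _) HA' hfrac' hdeg'
          (fun j hj => le_trans (hcsub j) (hcol j (Finset.mem_of_mem_erase hj)))
          (fun j hj => hbact j (Finset.mem_of_mem_erase hj))
          (by
            intro j hj
            by_cases hjc : j = c e
            · subst hjc
              rw [hA'empty]
              simp
            · have hjact : j ∉ act := fun hja => hj (Finset.mem_erase.2 ⟨hjc, hja⟩)
              calc (A'.filter (fun f => c f = j)).card
                  ≤ (A.filter (fun f => c f = j)).card :=
                    Finset.card_le_card (Finset.filter_subset_filter _ hA'sub)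
                _ ≤ b j := hbin j hjact)
      refine ⟨insert e M', ?_, ?_, ?_, ?_⟩
      · intro f hf
        rcases Finset.mem_insert.1 hf with rfl | hf
        · exact heA
        · exact hA'sub (hM'sub hf)
      · intro f hf g hg hne v hvf hvg
        rcases Finset.mem_insert.1 hf with hfe | hfM
        · rcases Finset.mem_insert.1 hg with hge | hgM
          · exact hne (by rw [hfe, hge])
          · exact hiso g (hA'sub (hM'sub hgM))
              (Finset.ne_of_mem_erase (hM'sub hgM)) v (hfe ▸ hvf) hvg
        · rcases Finset.mem_insert.1 hg with hge | hgM
          · exact hiso f (hA'sub (hM'sub hfM))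
              (Finset.ne_of_mem_erase (hM'sub hfM)) v (hge ▸ hvg) hvf
          · exact hM'match f hfM g hgM hne v hvf hvg
      · intro j
        rw [Finset.filter_insert]
        by_cases hjc : c e = j
        · rw [if_pos hjc]
          have hM'j : M'.filter (fun f => c f = j) = ∅ := by
            rw [Finset.filter_eq_empty_iff]
            intro f hf hcf
            have : f ∈ A'.filter (fun g => c g = c e) := by
              rw [hjc]
              exact Finset.mem_filter.2 ⟨hM'sub hf, hcf⟩
            rw [hA'empty] at this
            exact absurd this (Finset.notMem_empty f)
          rw [Finset.card_insert_of_notMem (by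
            intro hcon
            exact absurd (hM'j ▸ hcon) (Finset.notMem_empty e)), hM'j]
          have : b j = α := hbact j (hjc ▸ hce)
          simp only [Finset.card_empty]
          omega
        · rw [if_neg hjc]
          exact hM'caps j
      · rw [htoteq, mul_add, mul_one]
        have hMcard : (insert e M').card = M'.card + 1 := by
          rw [Finset.card_insert_of_notMem]
          intro hcon
          exact Finset.notMem_erase e A (hM'sub hcon)
        rw [hMcard]
        push_cast
        linarith
    · -- the color of e was already dropped
      have heAf : e ∈ A.filter (fun f => c f = c e) := Finset.mem_filter.2 ⟨heA, rfl⟩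
      have hbce : 1 ≤ b (c e) := by
        have := hbin (c e) hce
        have := Finset.card_pos.2 ⟨e, heAf⟩
        omega
      set b' : Fin k → ℕ := fun j => if j = c e then b (c e) - 1 else b j with hb'
      obtain ⟨M', hM'sub, hM'match, hM'caps, hM'card⟩ :=
        IH (meas c A' y act) (hmeaslt _) A' y act b'
          (le_refl _) HA' hfrac' hdeg'
          (fun j hj => le_trans (hcsub j) (hcol j hj))
          (fun j hj => by
            have hjne : j ≠ c e := fun h => hce (h ▸ hj)
            simp only [hb', if_neg hjne]
            exact hbact j hj)
          (by
            intro j hj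
            by_cases hjc : j = c e
            · subst hjc
              simp only [hb', if_pos rfl]
              have hfe : A'.filter (fun f => c f = c e)
                  = (A.filter (fun f => c f = c e)).erase e := by
                rw [hA', Finset.filter_erase]
              rw [hfe, Finset.card_erase_of_mem heAf]
              exact Nat.sub_le_sub_right (hbin (c e) hce) 1
            · simp only [hb', if_neg hjc]
              calc (A'.filter (fun f => c f = j)).card
                  ≤ (A.filter (fun f => c f = j)).card :=
                    Finset.card_le_card (Finset.filter_subset_filter _ hA'sub)
                _ ≤ b j := hbin j hj)
      refine ⟨insert e M', ?_, ?_, ?_, ?_⟩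
      · intro f hf
        rcases Finset.mem_insert.1 hf with rfl | hf
        · exact heA
        · exact hA'sub (hM'sub hf)
      · intro f hf g hg hne v hvf hvg
        rcases Finset.mem_insert.1 hf with hfe | hfM
        · rcases Finset.mem_insert.1 hg with hge | hgM
          · exact hne (by rw [hfe, hge])
          · exact hiso g (hA'sub (hM'sub hgM))
              (Finset.ne_of_mem_erase (hM'sub hgM)) v (hfe ▸ hvf) hvg
        · rcases Finset.mem_insert.1 hg with hge | hgM
          · exact hiso f (hA'sub (hM'sub hfM))
              (Finset.ne_of_mem_erase (hM'sub hfM)) v (hge ▸ hvg) hvf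
          · exact hM'match f hfM g hgM hne v hvf hvg
      · intro j
        rw [Finset.filter_insert]
        by_cases hjc : c e = j
        · rw [if_pos hjc]
          have h2 := hM'caps j
          simp only [hb', if_pos hjc.symm] at h2
          rw [Finset.card_insert_of_notMem (by
            intro hcon
            exact Finset.notMem_erase e A (hM'sub (Finset.mem_filter.1 hcon).1))]
          subst hjc
          omega
        · rw [if_neg hjc]
          have h2 := hM'caps j
          simp only [hb', if_neg (Ne.symm hjc)] at h2
          exact h2
      · rw [htoteq, mul_add, mul_one]
        have hMcard : (insert e M').card = M'.card + 1 := by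
          rw [Finset.card_insert_of_notMem]
          intro hcon
          exact Finset.notMem_erase e A (hM'sub hcon)
        rw [hMcard]
        push_cast
        linarith
  · by_cases h2 : ∃ j ∈ act, (A.filter (fun e => c e = j)).card ≤ α
    · -- DROP a small active color
      obtain ⟨j0, hj0, hj0card⟩ := h2
      obtain ⟨M', hM'sub, hM'match, hM'caps, hM'card⟩ :=
        IH (meas c A y (act.erase j0))
          (lt_of_lt_of_le (meas_lt_of_act_lt c A y y
            (Finset.card_erase_lt_of_mem hj0)) hn)
          A y (act.erase j0) b (le_refl _) HA hfrac hdeg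
          (fun j hj => hcol j (Finset.mem_of_mem_erase hj))
          (fun j hj => hbact j (Finset.mem_of_mem_erase hj))
          (by
            intro j hj
            by_cases hjc : j = j0
            · subst hjc
              rw [hbact j hj0]
              exact hj0card
            · exact hbin j (fun hja => hj (Finset.mem_erase.2 ⟨hjc, hja⟩)))
      exact ⟨M', hM'sub, hM'match, hM'caps, hM'card⟩
    · by_cases h3 : (univ.filter (fun v => vsum A y v = 1)).card
          + (act.filter (fun j => csum c A y j = 1)).card < A.card
      · -- PIVOT
        push_neg at h1
        have hfrac2 : ∀ e ∈ A, 0 < y e ∧ y e < 1 := by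
          intro e he
          exact ⟨(hfrac e he).1, lt_of_le_of_ne (hfrac e he).2 (h1 e he)⟩
        obtain ⟨y', hbounds, hdeg', hcol', htot', hDpres, hTpres, hprog⟩ :=
          pivot_step c A y act hfrac2 hdeg hcol h3
        set A' := A.filter (fun e => 0 < y' e) with hA'
        have hA'sub : A' ⊆ A := Finset.filter_subset _ _
        have hzero : ∀ e ∈ A, e ∉ A' → y' e = 0 := by
          intro e he hne
          have h4 := (hbounds e he).1
          by_contra hne2
          exact hne (Finset.mem_filter.2 ⟨he, lt_of_le_of_ne h4 (Ne.symm hne2)⟩)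
        have hsums : ∀ (p : Sym2 V → Prop) (hp : DecidablePred p),
            ∑ e ∈ A'.filter p, y' e = ∑ e ∈ A.filter p, y' e := by
          intro p hp
          refine Finset.sum_subset (Finset.filter_subset_filter _ hA'sub) ?_
          intro e he hne
          have heA := (Finset.mem_filter.1 he).1
          have hpe := (Finset.mem_filter.1 he).2
          refine hzero e heA (fun hcon => hne (Finset.mem_filter.2 ⟨hcon, hpe⟩))
        have hvs : ∀ v, vsum A' y' v = vsum A y' v := fun v => hsums _ _
        have hcs : ∀ j, csum c A' y' j = csum c A y' j := fun j => hsums _ _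
        have hts : tot A' y' = tot A y' := by
          refine Finset.sum_subset hA'sub ?_
          intro e he hne
          exact hzero e he hne
        have hmeas2 : meas c A' y' act < meas c A y act := by
          rcases hprog with ⟨e0, he0, hy'e0⟩ | hgrow
          · refine meas_lt_of_card_lt c y y' ?_
            refine Finset.card_lt_card ?_
            refine ⟨hA'sub, fun hcon => ?_⟩
            have : e0 ∈ A' := hcon he0
            have := (Finset.mem_filter.1 this).2
            linarith
          · rcases lt_or_eq_of_le (Finset.card_le_card hA'sub) with hlt | heq
            · exact meas_lt_of_card_lt c y y' hlt
            · have hAA : A' = A := Finset.eq_of_subset_of_card_le hA'sub (le_of_eq heq.symm)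
              rw [hAA]
              refine meas_lt_of_tight c A y y' act hgrow (tight_bound c A y' act)
        obtain ⟨M', hM'sub, hM'match, hM'caps, hM'card⟩ :=
          IH (meas c A' y' act) (lt_of_lt_of_le hmeas2 hn) A' y' act b (le_refl _)
            (fun e he => HA e (hA'sub he))
            (fun e he => ⟨(Finset.mem_filter.1 he).2, (hbounds e (hA'sub he)).2⟩)
            (fun v => (hvs v) ▸ hdeg' v)
            (fun j hj => (hcs j) ▸ hcol' j hj)
            hbact
            (fun j hj => le_trans (Finset.card_le_card
              (Finset.filter_subset_filter _ hA'sub)) (hbin j hj))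
        refine ⟨M', fun f hf => hA'sub (hM'sub hf), hM'match, hM'caps, ?_⟩
        calc (1 - 2 / (α:ℝ)) * tot A y ≤ (1 - 2 / (α:ℝ)) * tot A' y' := by
              rw [hts]
              exact mul_le_mul_of_nonneg_left htot' hfac0
          _ ≤ (M'.card : ℝ) := hM'card
      · -- PHASE 2 : kill active colors and round with König
        push_neg at h2 h3
        have hfat : ∀ j ∈ act, α + 1 ≤ (A.filter (fun e => c e = j)).card := by
          intro j hj
          exact Nat.succ_le_of_lt (h2 j hj)
        have hfib : ∀ j ∈ act, (A.filter (fun e => c e ∈ act)).filter (fun e => c e = j)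
            = A.filter (fun e => c e = j) := by
          intro j hj
          rw [Finset.filter_filter]
          refine Finset.filter_congr ?_
          intro e he
          constructor
          · intro h; exact h.2
          · intro h; exact ⟨h ▸ hj, h⟩
        have hJ2 : ∑ j ∈ act, (A.filter (fun e => c e = j)).card ≤ A.card := by
          have hmaps : ∀ e ∈ A.filter (fun e => c e ∈ act), c e ∈ act :=
            fun e he => (Finset.mem_filter.1 he).2
          have h4 := Finset.card_eq_sum_card_fiberwise hmaps
          calc ∑ j ∈ act, (A.filter (fun e => c e = j)).card
              = ∑ j ∈ act, ((A.filter (fun e => c e ∈ act)).filter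
                  (fun e => c e = j)).card := by
                refine Finset.sum_congr rfl fun j hj => ?_
                rw [hfib j hj]
            _ = (A.filter (fun e => c e ∈ act)).card := h4.symm
            _ ≤ A.card := Finset.card_filter_le _ _
        have hJ1 : (α + 1) * act.card ≤ ∑ j ∈ act, (A.filter (fun e => c e = j)).card := by
          calc (α + 1) * act.card = ∑ _j ∈ act, (α + 1) := by
                rw [Finset.sum_const, smul_eq_mul, mul_comm]
            _ ≤ _ := Finset.sum_le_sum hfat
        have hTJ : (act.filter (fun j => csum c A y j = 1)).card ≤ act.card :=
          Finset.card_filter_le _ _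
        have hαJ : α * act.card ≤ (univ.filter (fun v => vsum A y v = 1)).card := by
          have := hJ1.trans (hJ2.trans h3)
          nlinarith [hTJ]
        have hnondiag : ∀ e ∈ A, ¬ e.IsDiag := by
          intro e he
          obtain ⟨a, b', rfl, ha, hb⟩ := HA e he
          rw [Sym2.mk_isDiag_iff]
          intro hcon
          exact hb (hcon ▸ ha)
        have hD2 : ((univ.filter (fun v => vsum A y v = 1)).card : ℝ) ≤ 2 * tot A y := by
          have h5 : ((univ.filter (fun v => vsum A y v = 1)).card : ℝ)
              = ∑ v ∈ univ.filter (fun v => vsum A y v = 1), vsum A y v := by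
            rw [Finset.sum_congr rfl (fun v hv => (Finset.mem_filter.1 hv).2)]
            simp
          rw [h5, ← sum_vsum_univ A y hnondiag]
          refine Finset.sum_le_sum_of_subset_of_nonneg (Finset.subset_univ _) ?_
          intro v _ _
          exact vsum_nonneg_mem A y (fun e he => (hfrac e he).1.le) v
        have hJtot : (α:ℝ) * act.card ≤ 2 * tot A y := by
          calc (α:ℝ) * act.card = ((α * act.card : ℕ) : ℝ) := by push_cast; ring
            _ ≤ ((univ.filter (fun v => vsum A y v = 1)).card : ℝ) := by
              exact_mod_cast hαJ
            _ ≤ 2 * tot A y := hD2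
        set A'' := A.filter (fun e => c e ∉ act) with hA''
        have hsplit : tot A y = tot A'' y
            + ∑ e ∈ A.filter (fun e => c e ∈ act), y e := by
          unfold tot
          rw [hA'']
          rw [← Finset.sum_filter_add_sum_filter_not A (fun e => c e ∈ act) y]
          ring
        have hactmass : ∑ e ∈ A.filter (fun e => c e ∈ act), y e ≤ (act.card : ℝ) := by
          have hmaps : ∀ e ∈ A.filter (fun e => c e ∈ act), c e ∈ act :=
            fun e he => (Finset.mem_filter.1 he).2
          have h4 := Finset.sum_fiberwise_of_maps_to hmaps y
          calc ∑ e ∈ A.filter (fun e => c e ∈ act), y e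
              = ∑ j ∈ act, ∑ e ∈ (A.filter (fun e => c e ∈ act)).filter
                  (fun e => c e = j), y e := h4.symm
            _ = ∑ j ∈ act, csum c A y j := by
                refine Finset.sum_congr rfl fun j hj => ?_
                unfold csum
                rw [hfib j hj]
            _ ≤ ∑ _j ∈ act, (1:ℝ) := Finset.sum_le_sum hcol
            _ = act.card := by simp
        have htot'' : tot A y - act.card ≤ tot A'' y := by linarith
        obtain ⟨M, hMsub, hMmatch, hMcard⟩ :=
          konig PF A'' y (fun e he => HA e (Finset.filter_subset _ _ he))
            (fun e he => (hfrac e (Finset.filter_subset _ _ he)).1.le)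
            (fun v => by
              refine le_trans ?_ (hdeg v)
              unfold vsum
              refine Finset.sum_le_sum_of_subset_of_nonneg
                (Finset.filter_subset_filter _ (Finset.filter_subset _ _)) ?_
              intro g hg _
              exact (hfrac g (Finset.mem_filter.1 hg).1).1.le)
        refine ⟨M, fun f hf => Finset.filter_subset _ _ (hMsub hf), hMmatch, ?_, ?_⟩
        · intro j
          by_cases hj : j ∈ act
          · have hempty : M.filter (fun e => c e = j) = ∅ := by
              rw [Finset.filter_eq_empty_iff]
              intro f hf hcf
              have := (Finset.mem_filter.1 (hMsub hf)).2
              exact this (hcf ▸ hj)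
            rw [hempty]
            simp
          · calc (M.filter (fun e => c e = j)).card
                ≤ (A.filter (fun e => c e = j)).card := by
                  refine Finset.card_le_card ?_
                  refine Finset.filter_subset_filter _ ?_
                  intro f hf
                  exact Finset.filter_subset _ _ (hMsub hf)
              _ ≤ b j := hbin j hj
        · have hstep : (α:ℝ) * tot A y - 2 * tot A y ≤ (α:ℝ) * tot A'' y := by
            have h5 : (α:ℝ) * (tot A y - act.card) ≤ (α:ℝ) * tot A'' y :=
              mul_le_mul_of_nonneg_left htot'' hαR.le
            nlinarith [hJtot]
          have h6 : (1 - 2 / (α:ℝ)) * tot A y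
              = ((α:ℝ) * tot A y - 2 * tot A y) / α := by
            field_simp
          rw [h6]
          rw [div_le_iff₀ hαR]
          calc (α:ℝ) * tot A y - 2 * tot A y ≤ (α:ℝ) * tot A'' y := hstep
            _ ≤ (α:ℝ) * (M.card : ℝ) := mul_le_mul_of_nonneg_left hMcard hαR.le
            _ = (M.card : ℝ) * α := by ring

end OBCM

open Finset OBCM

/-- 1-Bounded Color Matching on bipartite graphs: for any integer `α ≥ 3` and any
fractional solution `x` of the LP with all color bounds 1, there is a matching `M` with
at most `α` edges of each color and `|M| ≥ (1 - 3/α) ∑_e x_e`. -/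
theorem one_bcm_bipartite_asymptotic {V : Type*} [Fintype V] [DecidableEq V]
    (G : SimpleGraph V) [DecidableRel G.Adj] (hbip : IsBipartiteGraph G)
    (k : ℕ) (c : Sym2 V → Fin k)
    (α : ℕ) (hα : 3 ≤ α)
    (x : Sym2 V → ℝ) (hx : ∀ e ∈ G.edgeFinset, 0 ≤ x e ∧ x e ≤ 1)
    (hdeg : ∀ v : V, ∑ e ∈ G.edgeFinset.filter (fun e => v ∈ e), x e ≤ 1)
    (hcol : ∀ j : Fin k, ∑ e ∈ G.edgeFinset.filter (fun e => c e = j), x e ≤ 1) :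
    ∃ M ⊆ G.edgeFinset, IsMatchingSet M ∧
      (∀ j : Fin k, (M.filter (fun e => c e = j)).card ≤ α) ∧
      (1 - 3 / (α : ℝ)) * ∑ e ∈ G.edgeFinset, x e ≤ (M.card : ℝ) := by
  classical
  obtain ⟨P, hP⟩ := hbip
  set PF : Finset V := univ.filter (fun v => v ∈ P) with hPF
  set A₀ : Finset (Sym2 V) := G.edgeFinset.filter (fun e => 0 < x e) with hA₀
  have hA₀sub : A₀ ⊆ G.edgeFinset := Finset.filter_subset _ _
  have HA₀ : ∀ e ∈ A₀, ∃ a b', e = s(a, b') ∧ a ∈ PF ∧ b' ∉ PF := by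
    intro e he
    have heE : e ∈ G.edgeSet := by
      rw [← SimpleGraph.mem_edgeFinset]
      exact hA₀sub he
    induction e using Sym2.ind with
    | _ u v =>
      have hadj : G.Adj u v := heE
      by_cases hu : u ∈ P
      · refine ⟨u, v, rfl, by simp [hPF, hu], ?_⟩
        have hv : v ∉ P := (hP hadj).1 hu
        simp [hPF, hv]
      · refine ⟨v, u, Sym2.eq_swap, ?_, by simp [hPF, hu]⟩
        have hv : v ∈ P := by
          by_contra hv
          exact hu ((hP hadj).2 hv)
        simp [hPF, hv]
  have hxnn : ∀ e ∈ G.edgeFinset, 0 ≤ x e := fun e he => (hx e he).1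
  have hfrac₀ : ∀ e ∈ A₀, 0 < x e ∧ x e ≤ 1 := by
    intro e he
    exact ⟨(Finset.mem_filter.1 he).2, (hx e (hA₀sub he)).2⟩
  have hsumsub : ∀ (p : Sym2 V → Prop) (hp : DecidablePred p),
      ∑ e ∈ A₀.filter p, x e ≤ ∑ e ∈ G.edgeFinset.filter p, x e := by
    intro p hp
    refine Finset.sum_le_sum_of_subset_of_nonneg
      (Finset.filter_subset_filter _ hA₀sub) ?_
    intro e he _
    exact hxnn e (Finset.mem_filter.1 he).1
  have hdeg₀ : ∀ v, vsum A₀ x v ≤ 1 := fun v => le_trans (hsumsub _ _) (hdeg v)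
  have hcol₀ : ∀ j ∈ (univ : Finset (Fin k)), csum c A₀ x j ≤ 1 :=
    fun j _ => le_trans (hsumsub _ _) (hcol j)
  have hα2 : 2 ≤ α := by omega
  obtain ⟨M, hMsub, hMmatch, hMcaps, hMcard⟩ :=
    rec_main PF c α hα2 (meas c A₀ x univ) A₀ x univ (fun _ => α) (le_refl _)
      HA₀ hfrac₀ hdeg₀ hcol₀ (fun _ _ => rfl) (fun j hj => absurd (Finset.mem_univ j) hj)
  have htoteq : tot A₀ x = ∑ e ∈ G.edgeFinset, x e := by
    unfold tot
    refine Finset.sum_subset hA₀sub ?_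
    intro e he hne
    have h1 := hxnn e he
    by_contra h2
    exact hne (Finset.mem_filter.2 ⟨he, lt_of_le_of_ne h1 (Ne.symm h2)⟩)
  refine ⟨M, fun f hf => hA₀sub (hMsub hf), hMmatch, hMcaps, ?_⟩
  have hαR : (0:ℝ) < (α:ℝ) := by
    have : (3:ℝ) ≤ (α:ℝ) := by exact_mod_cast hα
    linarith
  have hS0 : 0 ≤ ∑ e ∈ G.edgeFinset, x e := Finset.sum_nonneg hxnn
  have hcoef : (1 - 3 / (α:ℝ)) ≤ (1 - 2 / (α:ℝ)) := by
    have : (2:ℝ) / α ≤ 3 / α := by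
      exact (div_le_div_iff_of_pos_right hαR).2 (by norm_num)
    linarith
  calc (1 - 3 / (α:ℝ)) * ∑ e ∈ G.edgeFinset, x e
      ≤ (1 - 2 / (α:ℝ)) * ∑ e ∈ G.edgeFinset, x e :=
        mul_le_mul_of_nonneg_right hcoef hS0
    _ = (1 - 2 / (α:ℝ)) * tot A₀ x := by rw [htoteq]
    _ ≤ (M.card : ℝ) := hMcard
end
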